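/- arXiv:2602.11250 — 6 statements merged into one kernel-verified Lean document; each statement's English description precedes it below -/
import Mathlib

section
/- Fix an integer k ≥ 2, a real h > 0, and an interior index J with 1 ≤ J ≤ k−1. Let x₀ ≤ x₁ ≤ ⋯ ≤ x_k be real numbers, u₀, …, u_k ∈ [0,1], r ≥ 0, and θ ∈ [−π/2, π/2]. Let L be the tuple-optimization path length through all k+1 points, and let L̃ = min{ L , 2h·√(r²cos²θ + (h(1 − u_J) + r·sinθ)²) + min_{ξ ∈ Ξ} ∑_{i=1}^{k−1} √((x_{ξ(i)} − x_{ξ(i−1)})² + h⁴(u_{ξ(i)} − u_{ξ(i−1)})²) }, where Ξ is the set of bijective enumerations ξ(0), ξ(1), …, ξ(k−1) of {0, 1, …, k} \ {J} with ξ(0) = 0 and ξ(k−1) = k. Then x_k − x₀ ≤ L̃ ≤ (x_k − x₀) + k·h². (The band-crossover path length satisfies the same sandwich relation as the tuple-optimization path length.) -/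
open Finset

lemma tele (n : ℕ) (G : ℕ → ℝ) : ∑ i : Fin n, (G (i.1 + 1) - G i.1) = G n - G 0 := by
  rw [Fin.sum_univ_eq_sum_range (fun i => G (i+1) - G i), Finset.sum_range_sub]

lemma sqrt_term_ge (a b c : ℝ) (hc : 0 ≤ c) : a ≤ Real.sqrt (a ^ 2 + c * b ^ 2) := by
  calc a ≤ |a| := le_abs_self a
    _ = Real.sqrt (a ^ 2) := (Real.sqrt_sq_eq_abs a).symm
    _ ≤ _ := Real.sqrt_le_sqrt (by nlinarith [sq_nonneg b])

lemma sqrt_term_le (a b h : ℝ) (ha : 0 ≤ a) (hb : |b| ≤ 1) :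
    Real.sqrt (a ^ 2 + h ^ 4 * b ^ 2) ≤ a + h ^ 2 := by
  have h1 : a ^ 2 + h ^ 4 * b ^ 2 ≤ (a + h ^ 2) ^ 2 := by
    have hb2 : b ^ 2 ≤ 1 := by nlinarith [sq_abs b, abs_nonneg b]
    nlinarith [sq_nonneg (h ^ 2), mul_nonneg ha (sq_nonneg h)]
  calc Real.sqrt (a ^ 2 + h ^ 4 * b ^ 2) ≤ Real.sqrt ((a + h ^ 2) ^ 2) :=
        Real.sqrt_le_sqrt h1
    _ = a + h ^ 2 := Real.sqrt_sq (by positivity)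

/-- The band-crossover path length `L̃ = min{L, 2h·√(r²cos²θ + (h(1−u_J)+r·sinθ)²) + L'}`,
where `L` is the tuple-optimization path length through all `k+1` points and `L'` is the
optimal path length through the `k` points `{0, …, k} \ {J}` (from `0` to `k`), satisfies
the same sandwich relation `x_k − x₀ ≤ L̃ ≤ x_k − x₀ + k·h²`. -/
theorem band_crossover_sandwich
    (k : ℕ) (hk : 2 ≤ k) (h : ℝ) (hh : 0 < h)
    (J : Fin (k + 1)) (hJ1 : 1 ≤ (J : ℕ)) (hJ2 : (J : ℕ) ≤ k - 1)
    (x u : Fin (k + 1) → ℝ) (hx : Monotone x)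
    (hu : ∀ i, u i ∈ Set.Icc (0 : ℝ) 1)
    (r : ℝ) (hr : 0 ≤ r)
    (θ : ℝ) (hθ : θ ∈ Set.Icc (-(Real.pi / 2)) (Real.pi / 2))
    (L : ℝ)
    (hL : IsLeast
      {y : ℝ | ∃ π : Equiv.Perm (Fin (k + 1)),
        π 0 = 0 ∧ π (Fin.last k) = Fin.last k ∧
        y = ∑ i : Fin k,
          Real.sqrt ((x (π i.succ) - x (π i.castSucc)) ^ 2 +
            h ^ 4 * (u (π i.succ) - u (π i.castSucc)) ^ 2)} L)
    (L' : ℝ)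
    (hL' : IsLeast
      {y : ℝ | ∃ ξ : Fin k → Fin (k + 1),
        Function.Injective ξ ∧
        (∀ j : Fin (k + 1), j ∈ Set.range ξ ↔ j ≠ J) ∧
        ξ ⟨0, by omega⟩ = 0 ∧ ξ ⟨k - 1, by omega⟩ = Fin.last k ∧
        y = ∑ i : Fin (k - 1),
          Real.sqrt ((x (ξ ⟨i.1 + 1, by have := i.2; omega⟩) -
              x (ξ ⟨i.1, by have := i.2; omega⟩)) ^ 2 +
            h ^ 4 * (u (ξ ⟨i.1 + 1, by have := i.2; omega⟩) -
              u (ξ ⟨i.1, by have := i.2; omega⟩)) ^ 2)} L')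
    (Lt : ℝ)
    (hLt : Lt = min L
      (2 * h * Real.sqrt ((r * Real.cos θ) ^ 2 +
        (h * (1 - u J) + r * Real.sin θ) ^ 2) + L')) :
    x (Fin.last k) - x 0 ≤ Lt ∧ Lt ≤ (x (Fin.last k) - x 0) + k * h ^ 2 := by
  have hc4 : (0:ℝ) ≤ h ^ 4 := by positivity
  have hb1 : ∀ n : ℕ, min n k < k + 1 := fun n => by omega
  have hb2 : ∀ n : ℕ, min n (k - 1) < k := fun n => by omega
  -- lower bound for L
  have hLlow : x (Fin.last k) - x 0 ≤ L := by
    obtain ⟨π, hπ0, hπl, hsum⟩ := hL.1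
    set G : ℕ → ℝ := fun n => x (π ⟨min n k, hb1 n⟩) with hG
    have key : ∀ i : Fin k, G (i.1 + 1) - G i.1 ≤
        Real.sqrt ((x (π i.succ) - x (π i.castSucc)) ^ 2 +
            h ^ 4 * (u (π i.succ) - u (π i.castSucc)) ^ 2) := by
      intro i
      have h1 : (⟨min (i.1 + 1) k, hb1 _⟩ : Fin (k+1)) = i.succ := by
        ext; simp; all_goals omega
      have h2 : (⟨min i.1 k, hb1 _⟩ : Fin (k+1)) = i.castSucc := by
        ext; simp; all_goals omega
      simp only [hG, h1, h2]
      exact sqrt_term_ge _ _ _ hc4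
    have e1 : (⟨min k k, hb1 k⟩ : Fin (k+1)) = Fin.last k := by ext; simp
    have e2 : (⟨min 0 k, hb1 0⟩ : Fin (k+1)) = 0 := by ext; simp
    calc x (Fin.last k) - x 0 = G k - G 0 := by simp only [hG, e1, e2, hπl, hπ0]
      _ = ∑ i : Fin k, (G (i.1 + 1) - G i.1) := (tele k G).symm
      _ ≤ _ := by rw [hsum]; exact Finset.sum_le_sum fun i _ => key i
  -- lower bound for L'
  have hL'low : x (Fin.last k) - x 0 ≤ L' := by
    obtain ⟨ξ, hinj, hrg, hξ0, hξl, hsum⟩ := hL'.1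
    set G : ℕ → ℝ := fun n => x (ξ ⟨min n (k-1), hb2 n⟩) with hG
    have key : ∀ i : Fin (k - 1), G (i.1 + 1) - G i.1 ≤
        Real.sqrt ((x (ξ ⟨i.1 + 1, by have := i.2; omega⟩) -
              x (ξ ⟨i.1, by have := i.2; omega⟩)) ^ 2 +
            h ^ 4 * (u (ξ ⟨i.1 + 1, by have := i.2; omega⟩) -
              u (ξ ⟨i.1, by have := i.2; omega⟩)) ^ 2) := by
      intro i
      have h1 : (⟨min (i.1 + 1) (k-1), hb2 _⟩ : Fin k) =
          ⟨i.1 + 1, by have := i.2; omega⟩ := by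
        ext; simp; all_goals omega
      have h2 : (⟨min i.1 (k-1), hb2 _⟩ : Fin k) =
          ⟨i.1, by have := i.2; omega⟩ := by
        ext; simp; all_goals omega
      simp only [hG, h1, h2]
      exact sqrt_term_ge _ _ _ hc4
    have e1 : (⟨min (k-1) (k-1), hb2 _⟩ : Fin k) = ⟨k-1, by omega⟩ := by ext; simp
    have e2 : (⟨min 0 (k-1), hb2 0⟩ : Fin k) = ⟨0, by omega⟩ := by ext; simp
    calc x (Fin.last k) - x 0 = G (k-1) - G 0 := by
          simp only [hG, e1, e2, hξl, hξ0]
      _ = ∑ i : Fin (k-1), (G (i.1 + 1) - G i.1) := (tele (k-1) G).symm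
      _ ≤ _ := by rw [hsum]; exact Finset.sum_le_sum fun i _ => key i
  -- upper bound via identity permutation
  have hLup : L ≤ (x (Fin.last k) - x 0) + k * h ^ 2 := by
    have hle := hL.2 ⟨Equiv.refl _, rfl, rfl, rfl⟩
    set G : ℕ → ℝ := fun n => x (⟨min n k, hb1 n⟩ : Fin (k+1)) with hG
    have key : ∀ i : Fin k,
        Real.sqrt ((x i.succ - x i.castSucc) ^ 2 +
          h ^ 4 * (u i.succ - u i.castSucc) ^ 2) ≤
        (G (i.1 + 1) - G i.1) + h ^ 2 := by
      intro i
      have h1 : (⟨min (i.1 + 1) k, hb1 _⟩ : Fin (k+1)) = i.succ := by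
        ext; simp; all_goals omega
      have h2 : (⟨min i.1 k, hb1 _⟩ : Fin (k+1)) = i.castSucc := by
        ext; simp; all_goals omega
      simp only [hG, h1, h2]
      refine sqrt_term_le _ _ _ (sub_nonneg.2 (hx (Fin.castSucc_le_succ i))) ?_
      have hs := hu i.succ
      have hcs := hu i.castSucc
      simp only [Set.mem_Icc] at hs hcs
      rw [abs_sub_le_iff]
      constructor <;> linarith
    have e1 : (⟨min k k, hb1 k⟩ : Fin (k+1)) = Fin.last k := by ext; simp
    have e2 : (⟨min 0 k, hb1 0⟩ : Fin (k+1)) = 0 := by ext; simp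
    calc L ≤ _ := hle
      _ ≤ ∑ i : Fin k, ((G (i.1 + 1) - G i.1) + h ^ 2) :=
          Finset.sum_le_sum fun i _ => key i
      _ = (x (Fin.last k) - x 0) + k * h ^ 2 := by
          rw [Finset.sum_add_distrib, tele k G]
          simp only [hG, e1, e2, Finset.sum_const, Finset.card_univ,
            Fintype.card_fin, nsmul_eq_mul]
  have hcpos : (0:ℝ) ≤ 2 * h * Real.sqrt ((r * Real.cos θ) ^ 2 +
      (h * (1 - u J) + r * Real.sin θ) ^ 2) := by positivity
  subst hLt
  constructor
  · exact le_min hLlow (by linarith)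
  · exact le_trans (min_le_left _ _) hLup
end

section
/- Fix integers k ≥ 1 and M ≥ 1 and a real h > 0. On a probability space, let (G₁, B₁), …, (G_M, B_M) be i.i.d. pairs of real random variables such that G₁ has the Gamma distribution with shape k and rate 1, and 0 ≤ B₁ ≤ k·h² almost surely. Set L_i = G_i + B_i, β̂ = (1/(M·k·h))·∑_{i=1}^{M} L_i, and β̄ = E[L₁]/(k·h). Then for every δ ∈ (0,1), with t = log(4/δ) and ε = (1/(k·h))·( √(2kt/M) + t/M + k·h²·√(t/(2M)) ), one has P( |β̂ − β̄| ≥ ε ) ≤ δ. -/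
open MeasureTheory ProbabilityTheory

section Helpers

open Real Set
open scoped ENNReal NNReal

/-- `x - log(1+x) ≤ x²/2` for `x ≥ 0`. -/
private lemma mc_ineqB {x : ℝ} (hx : 0 ≤ x) : x - Real.log (1 + x) ≤ x ^ 2 / 2 := by
  set f : ℝ → ℝ := fun y => y ^ 2 / 2 - y + Real.log (1 + y) with hf
  have hd : ∀ y : ℝ, 0 < 1 + y → HasDerivAt f (y - 1 + (1 + y)⁻¹) y := by
    intro y hy
    have h1 : HasDerivAt (fun y : ℝ => 1 + y) 1 y := by
      simpa using (hasDerivAt_id y).const_add 1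
    have h2 : HasDerivAt (fun y : ℝ => Real.log (1 + y)) (1 / (1 + y)) y := by
      simpa using (h1.log hy.ne')
    have h3 : HasDerivAt (fun y : ℝ => y ^ 2 / 2 - y) (y - 1) y := by
      have := ((hasDerivAt_pow 2 y).div_const 2).sub (hasDerivAt_id' y)
      simp at this; exact this
    rw [one_div] at h2
    exact h3.add h2
  have hmono : MonotoneOn f (Set.Ici (0:ℝ)) := by
    apply monotoneOn_of_deriv_nonneg (convex_Ici 0)
    · intro y hy
      exact ((hd y (by simp at hy ⊢; linarith)).continuousAt).continuousWithinAt
    · intro y hy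
      rw [interior_Ici] at hy
      exact ((hd y (by simp at hy ⊢; linarith)).differentiableAt).differentiableWithinAt
    · intro y hy
      rw [interior_Ici] at hy
      simp only [Set.mem_Ioi] at hy
      rw [(hd y (by linarith)).deriv]
      have h1 : 0 < 1 + y := by linarith
      have : y - 1 + (1+y)⁻¹ = y^2/(1+y) := by field_simp; ring
      rw [this]
      positivity
  have h0 : f 0 ≤ f x := hmono (by simp) (by simpa using hx) hx
  simp only [hf] at h0
  simp only [ne_eq, OfNat.ofNat_ne_zero, not_false_eq_true, zero_pow, zero_div, zero_sub,
    add_zero, Real.log_one, neg_zero, sub_zero] at h0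
  linarith

/-- `-log(1-x) - x ≤ x²/(2(1-x))` for `0 ≤ x < 1`. -/
private lemma mc_ineqA {x : ℝ} (hx0 : 0 ≤ x) (hx1 : x < 1) :
    -Real.log (1 - x) - x ≤ x ^ 2 / (2 * (1 - x)) := by
  set f : ℝ → ℝ := fun y => y ^ 2 / (2 * (1 - y)) + y + Real.log (1 - y) with hf
  have hd : ∀ y : ℝ, y < 1 →
      HasDerivAt f ((2*y * (2*(1-y)) - y^2 * (-2)) / (2*(1-y))^2 + 1 + (-1)/(1-y)) y := by
    intro y hy
    have hne : (1:ℝ) - y ≠ 0 := by intro h; linarith [h]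
    have h1 : HasDerivAt (fun y : ℝ => 1 - y) (-1) y := by
      simpa using (hasDerivAt_id y).const_sub 1
    have h2 : HasDerivAt (fun y : ℝ => Real.log (1 - y)) ((-1) / (1 - y)) y := by
      simpa [div_eq_mul_inv] using (h1.log hne)
    have h3 : HasDerivAt (fun y : ℝ => 2 * (1 - y)) (-2) y := by
      have := h1.const_mul (2:ℝ); simpa using this
    have h4 : HasDerivAt (fun y : ℝ => y ^ 2) (2*y) y := by
      simpa using hasDerivAt_pow 2 y
    have h5 : HasDerivAt (fun y : ℝ => y ^ 2 / (2 * (1 - y)))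
        ((2*y * (2*(1-y)) - y^2 * (-2)) / (2*(1-y))^2) y := by
      exact h4.div h3 (by simpa using hne)
    exact (h5.add (hasDerivAt_id y)).add h2
  have hkey : ∀ y : ℝ, 0 < y → y < 1 →
      (2*y * (2*(1-y)) - y^2 * (-2)) / (2*(1-y))^2 + 1 + (-1)/(1-y) = y^2/(2*(1-y)^2) := by
    intro y hy0 hy1
    have hne : (1:ℝ) - y ≠ 0 := by intro h; linarith [h]
    field_simp
    ring
  have hmono : MonotoneOn f (Set.Ico (0:ℝ) 1) := by
    apply monotoneOn_of_deriv_nonneg (convex_Ico 0 1)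
    · intro y hy
      exact ((hd y hy.2).continuousAt).continuousWithinAt
    · rw [interior_Ico]
      intro y hy
      exact ((hd y hy.2).differentiableAt).differentiableWithinAt
    · rw [interior_Ico]
      intro y hy
      rw [(hd y hy.2).deriv, hkey y hy.1 hy.2]
      have : (0:ℝ) < 1 - y := by linarith [hy.2]
      positivity
  have h0 : f 0 ≤ f x := hmono (by constructor <;> norm_num) (by exact ⟨hx0, hx1⟩) hx0
  simp only [hf] at h0
  norm_num at h0
  linarith

/-- Hoeffding's core analytic inequality: `-pu + log(1-p+p e^u) ≤ u²/8` for `p ∈ [0,1]`. -/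
private lemma mc_hoeffding_aux {p : ℝ} (hp0 : 0 ≤ p) (hp1 : p ≤ 1) (u : ℝ) :
    -p * u + Real.log (1 - p + p * Real.exp u) ≤ u ^ 2 / 8 := by
  set D : ℝ → ℝ := fun u => 1 - p + p * Real.exp u with hDdef
  have hDpos : ∀ u, 0 < D u := by
    intro u
    simp only [hDdef]
    rcases eq_or_lt_of_le hp0 with h | h
    · simp [← h]
    · nlinarith [exp_pos u, mul_pos h (exp_pos u)]
  have hD : ∀ u, HasDerivAt D (p * Real.exp u) u := by
    intro u
    exact ((Real.hasDerivAt_exp u).const_mul p).const_add (1 - p)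
  set φ : ℝ → ℝ := fun u => u / 4 + p - p * Real.exp u / D u with hφdef
  have hφ : ∀ u, HasDerivAt φ
      (1/4 - (p * Real.exp u * D u - p * Real.exp u * (p * Real.exp u)) / (D u) ^ 2) u := by
    intro u
    have h1 : HasDerivAt (fun u : ℝ => u / 4 + p) (1/4) u := by
      simpa using ((hasDerivAt_id u).div_const 4).add_const p
    have h2 : HasDerivAt (fun u : ℝ => p * Real.exp u) (p * Real.exp u) u :=
      (Real.hasDerivAt_exp u).const_mul p
    have h3 := h2.div (hD u) (hDpos u).ne'
    exact h1.sub h3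
  have hφmono : Monotone φ := by
    apply monotone_of_deriv_nonneg
    · exact fun u => (hφ u).differentiableAt
    · intro u
      rw [(hφ u).deriv]
      have hE := exp_pos u
      have hD2 : (0:ℝ) < (D u) ^ 2 := pow_pos (hDpos u) 2
      rw [sub_nonneg, div_le_iff₀ hD2]
      have : (D u)^2 - 4 * (p * Real.exp u * (1 - p)) = ((1-p) - p * Real.exp u)^2 := by
        simp only [hDdef]; ring
      nlinarith [sq_nonneg ((1-p) - p * Real.exp u)]
  have hφ0 : φ 0 = 0 := by simp [hφdef, hDdef]
  set g : ℝ → ℝ := fun u => u ^ 2 / 8 + p * u - Real.log (D u) with hgdef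
  have hg : ∀ u, HasDerivAt g (φ u) u := by
    intro u
    have h1 : HasDerivAt (fun u : ℝ => u ^ 2 / 8 + p * u) (u / 4 + p) u := by
      have ha := (hasDerivAt_pow 2 u).div_const 8
      have hb := (hasDerivAt_id u).const_mul p
      have := ha.add hb
      convert this using 1
      · rfl
      · rfl
      · rfl
      push_cast
      ring
    have h2 : HasDerivAt (fun u : ℝ => Real.log (D u)) (p * Real.exp u / D u) u :=
      (hD u).log (hDpos u).ne'
    exact h1.sub h2
  have hg0 : g 0 = 0 := by simp [hgdef, hDdef]
  have key : ∀ u, 0 ≤ g u := by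
    intro u
    rcases le_or_gt 0 u with h | h
    · have hmono : MonotoneOn g (Set.Ici (0:ℝ)) := by
        apply monotoneOn_of_deriv_nonneg (convex_Ici 0)
        · exact fun y _ => (hg y).continuousAt.continuousWithinAt
        · intro y _
          exact (hg y).differentiableAt.differentiableWithinAt
        · intro y hy
          rw [interior_Ici] at hy
          rw [(hg y).deriv]
          rw [← hφ0]
          exact hφmono (le_of_lt hy)
      have := hmono (Set.self_mem_Ici) h h
      rwa [hg0] at this
    · have hanti : AntitoneOn g (Set.Iic (0:ℝ)) := by
        apply antitoneOn_of_deriv_nonpos (convex_Iic 0)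
        · exact fun y _ => (hg y).continuousAt.continuousWithinAt
        · intro y _
          exact (hg y).differentiableAt.differentiableWithinAt
        · intro y hy
          rw [interior_Iic] at hy
          rw [(hg y).deriv, ← hφ0]
          exact hφmono (le_of_lt hy)
      have := hanti (le_of_lt h) Set.self_mem_Iic (le_of_lt h)
      rwa [hg0] at this
  have := key u
  simp only [hgdef, hDdef] at this
  linarith

/-- Hoeffding's lemma: mgf bound for an a.e.-bounded random variable. -/
private lemma mc_mgf_le_hoeffding {Ω : Type*} [MeasurableSpace Ω] {μ : Measure Ω}
    [IsProbabilityMeasure μ]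
    {X : Ω → ℝ} (hXm : Measurable X) {a b : ℝ} (hab : a < b)
    (hbd : ∀ᵐ ω ∂μ, X ω ∈ Set.Icc a b) (s : ℝ) :
    mgf X μ s ≤ Real.exp (s * μ[X] + s ^ 2 * (b - a) ^ 2 / 8) := by
  have hXint : Integrable X μ := by
    refine Integrable.mono' (integrable_const (max |a| |b|)) hXm.aestronglyMeasurable ?_
    filter_upwards [hbd] with ω hω
    rw [Real.norm_eq_abs, abs_le]
    constructor
    · have := neg_abs_le a; linarith [hω.1, le_max_left |a| |b|]
    · have := le_abs_self b; linarith [hω.2, le_max_right |a| |b|]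
  set m : ℝ := μ[X] with hm
  have ham : a ≤ m := by
    have : μ[fun _ => a] ≤ μ[X] := by
      apply integral_mono_ae (integrable_const a) hXint
      filter_upwards [hbd] with ω hω using hω.1
    simpa using this
  have hmb : m ≤ b := by
    have : μ[X] ≤ μ[fun _ => b] := by
      apply integral_mono_ae hXint (integrable_const b)
      filter_upwards [hbd] with ω hω using hω.2
    simpa using this
  set a' : ℝ := a - m with ha'
  set b' : ℝ := b - m with hb'
  have hc : (0:ℝ) < b' - a' := by simp [ha', hb']; linarith
  set p : ℝ := -a' / (b' - a') with hp
  have hp0 : 0 ≤ p := by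
    apply div_nonneg _ hc.le
    simp [ha']; linarith
  have hp1 : p ≤ 1 := by
    rw [hp, div_le_one hc]
    simp [ha', hb']; linarith
  set u : ℝ := s * (b' - a') with hu
  have hconv : ∀ y : ℝ, a' ≤ y → y ≤ b' → Real.exp (s * y) ≤
      (b' - y) / (b' - a') * Real.exp (s * a') + (y - a') / (b' - a') * Real.exp (s * b') := by
    intro y hy1 hy2
    have h1 : (0:ℝ) ≤ (b' - y) / (b' - a') := div_nonneg (by linarith) hc.le
    have h2 : (0:ℝ) ≤ (y - a') / (b' - a') := div_nonneg (by linarith) hc.le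
    have h3 : (b' - y) / (b' - a') + (y - a') / (b' - a') = 1 := by
      field_simp
      ring
    have := convexOn_exp.2 (Set.mem_univ (s * a')) (Set.mem_univ (s * b')) h1 h2 h3
    simp only [smul_eq_mul] at this
    have harg : (b' - y) / (b' - a') * (s * a') + (y - a') / (b' - a') * (s * b') = s * y := by
      field_simp
      ring
    rwa [harg] at this
  have hYint : Integrable (fun ω => Real.exp (s * (X ω - m))) μ := by
    refine Integrable.mono' (integrable_const (max (Real.exp (s * a')) (Real.exp (s * b'))))
      (((hXm.sub_const m).const_mul s).exp).aestronglyMeasurable ?_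
    filter_upwards [hbd] with ω hω
    rw [Real.norm_eq_abs, abs_of_pos (exp_pos _)]
    rcases le_or_gt 0 s with hs | hs
    · refine le_max_of_le_right (exp_le_exp.2 ?_)
      have : X ω - m ≤ b' := by simp [hb']; linarith [hω.2]
      nlinarith
    · refine le_max_of_le_left (exp_le_exp.2 ?_)
      have : a' ≤ X ω - m := by simp [ha']; linarith [hω.1]
      nlinarith
  have hEY : μ[fun ω => X ω - m] = 0 := by
    rw [integral_sub hXint (integrable_const m)]
    simp [hm]
  have hint_bound : μ[fun ω => Real.exp (s * (X ω - m))] ≤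
      (b' * Real.exp (s * a') - a' * Real.exp (s * b')) / (b' - a') := by
    set E1 : ℝ := Real.exp (s * a') with hE1
    set E2 : ℝ := Real.exp (s * b') with hE2
    have hrw : (fun ω => (b' - (X ω - m)) / (b' - a') * E1 + ((X ω - m) - a') / (b' - a') * E2)
        = fun ω => (b' * E1 - a' * E2) / (b' - a') + ((E2 - E1) / (b' - a')) * (X ω - m) := by
      funext ω
      field_simp
      ring
    have hint2 : Integrable (fun ω => (E2 - E1) / (b' - a') * (X ω - m)) μ := by
      exact ((hXint.sub (integrable_const m)).const_mul _)
    have hintR : Integrable (fun ω => (b' - (X ω - m)) / (b' - a') * E1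
        + ((X ω - m) - a') / (b' - a') * E2) μ := by
      rw [hrw]
      exact (integrable_const _).add hint2
    refine le_trans (integral_mono_ae hYint hintR ?_) (le_of_eq ?_)
    · filter_upwards [hbd] with ω hω
      exact hconv _ (by simp [ha']; linarith [hω.1]) (by simp [hb']; linarith [hω.2])
    · rw [hrw, integral_add (integrable_const _) hint2, integral_const_mul]
      have hEY' : (∫ ω, (X ω - m) ∂μ) = 0 := hEY
      rw [hEY']
      simp
  have hD : (b' * Real.exp (s * a') - a' * Real.exp (s * b')) / (b' - a')
      = Real.exp (-p * u) * (1 - p + p * Real.exp u) := by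
    have e1 : -p * u = s * a' := by
      rw [hp, hu]; field_simp
    have e2 : 1 - p + p * Real.exp u = (b' - a' * Real.exp u) / (b' - a') := by
      rw [hp]; field_simp; ring
    have e3 : Real.exp (s * a') * (b' - a' * Real.exp (s * (b' - a')))
        = b' * Real.exp (s * a') - a' * Real.exp (s * b') := by
      rw [mul_sub, show (s * b') = s * a' + s * (b' - a') by ring, Real.exp_add]
      ring
    rw [e1, e2, hu, ← mul_div_assoc, e3]
  have hDpos : (0:ℝ) < 1 - p + p * Real.exp u := by
    rcases eq_or_lt_of_le hp0 with h | h
    · simp [← h]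
    · nlinarith [exp_pos u, mul_pos h (exp_pos u)]
  have hbound : Real.exp (-p * u) * (1 - p + p * Real.exp u) ≤ Real.exp (u ^ 2 / 8) := by
    rw [← Real.exp_log hDpos, ← Real.exp_add]
    exact Real.exp_le_exp.2 (mc_hoeffding_aux hp0 hp1 u)
  have hmgf : mgf X μ s = Real.exp (s * m) * μ[fun ω => Real.exp (s * (X ω - m))] := by
    rw [mgf, ← integral_const_mul]
    congr 1 with ω
    rw [← Real.exp_add]
    ring_nf
  rw [hmgf]
  have : Real.exp (s * m) * μ[fun ω => Real.exp (s * (X ω - m))]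
      ≤ Real.exp (s * m) * Real.exp (u ^ 2 / 8) := by
    apply mul_le_mul_of_nonneg_left _ (exp_pos _).le
    calc μ[fun ω => Real.exp (s * (X ω - m))]
        ≤ (b' * Real.exp (s * a') - a' * Real.exp (s * b')) / (b' - a') := hint_bound
      _ = Real.exp (-p * u) * (1 - p + p * Real.exp u) := hD
      _ ≤ Real.exp (u ^ 2 / 8) := hbound
  refine this.trans ?_
  rw [← Real.exp_add]
  apply Real.exp_le_exp.2
  have : u ^ 2 = s ^ 2 * (b - a) ^ 2 := by
    rw [hu]
    have : b' - a' = b - a := by simp [ha', hb']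
    rw [this]; ring
  rw [this]

end Helpers

section GammaFacts

open Real MeasureTheory ProbabilityTheory Set
open scoped ENNReal NNReal

private lemma mc_gammaMeasure_eq_withDensity (k : ℕ) :
    gammaMeasure (k : ℝ) 1 = volume.withDensity
      (fun x => ((gammaPDFReal (k : ℝ) 1 x).toNNReal : ℝ≥0∞)) := by
  rfl

private lemma mc_integral_gammaMeasure_eq {k : ℕ} (hk : 1 ≤ k) (g : ℝ → ℝ) :
    ∫ x, g x ∂(gammaMeasure (k : ℝ) 1)
      = ∫ x in Ioi (0:ℝ), gammaPDFReal (k : ℝ) 1 x * g x := by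
  have hkpos : (0:ℝ) < k := by exact_mod_cast hk
  have hmeas : Measurable fun x => (gammaPDFReal (k : ℝ) 1 x).toNNReal :=
    (measurable_gammaPDFReal _ _).real_toNNReal
  rw [mc_gammaMeasure_eq_withDensity, integral_withDensity_eq_integral_smul hmeas]
  have h1 : ∀ x : ℝ, (gammaPDFReal (k : ℝ) 1 x).toNNReal • g x
      = gammaPDFReal (k : ℝ) 1 x * g x := by
    intro x
    rw [NNReal.smul_def, smul_eq_mul, Real.coe_toNNReal _ (gammaPDFReal_nonneg hkpos one_pos x)]
  simp_rw [h1]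
  rw [← integral_Ici_eq_integral_Ioi]
  rw [← MeasureTheory.integral_indicator measurableSet_Ici]
  congr 1
  funext x
  rcases le_or_gt 0 x with hx | hx
  · rw [Set.indicator_of_mem (by exact hx : x ∈ Ici (0:ℝ))]
  · rw [Set.indicator_of_notMem (by simpa using hx)]
    simp [gammaPDFReal, not_le.2 hx]

private lemma mc_gammaPDFReal_on_pos {x : ℝ} (hx : 0 < x) (k : ℕ) :
    gammaPDFReal (k : ℝ) 1 x = (Real.Gamma k)⁻¹ * (x ^ ((k:ℝ) - 1) * Real.exp (-x)) := by
  rw [gammaPDFReal, if_pos hx.le]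
  rw [Real.one_rpow]
  ring_nf

private lemma mc_mgf_gammaMeasure {k : ℕ} (hk : 1 ≤ k) {s : ℝ} (hs : s < 1) :
    ∫ x, Real.exp (s * x) ∂(gammaMeasure (k : ℝ) 1) = ((1 - s)⁻¹) ^ k := by
  have hkpos : (0:ℝ) < k := by exact_mod_cast hk
  have hΓ : (0:ℝ) < Real.Gamma k := Real.Gamma_pos_of_pos hkpos
  have h1s : (0:ℝ) < 1 - s := by linarith
  rw [mc_integral_gammaMeasure_eq hk]
  have hcong : ∀ x ∈ Ioi (0:ℝ), gammaPDFReal (k : ℝ) 1 x * Real.exp (s * x)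
      = (Real.Gamma k)⁻¹ * (x ^ ((k:ℝ) - 1) * Real.exp (-((1 - s) * x))) := by
    intro x hx
    rw [mc_gammaPDFReal_on_pos hx]
    rw [mul_assoc, mul_assoc, ← Real.exp_add]
    ring_nf
  rw [setIntegral_congr_fun measurableSet_Ioi hcong]
  rw [MeasureTheory.integral_const_mul, Real.integral_rpow_mul_exp_neg_mul_Ioi hkpos h1s]
  rw [← Real.rpow_natCast ((1 - s)⁻¹) k, one_div]
  field_simp

private lemma mc_integrable_exp_gammaMeasure {k : ℕ} (hk : 1 ≤ k) {s : ℝ} (hs : s < 1) :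
    Integrable (fun x => Real.exp (s * x)) (gammaMeasure (k : ℝ) 1) := by
  have hkpos : (0:ℝ) < k := by exact_mod_cast hk
  have h1s : (0:ℝ) < 1 - s := by linarith
  have hmeas : Measurable fun x => (gammaPDFReal (k : ℝ) 1 x).toNNReal :=
    (measurable_gammaPDFReal _ _).real_toNNReal
  rw [mc_gammaMeasure_eq_withDensity, integrable_withDensity_iff_integrable_coe_smul hmeas]
  have h1 : (fun x => ((gammaPDFReal (k : ℝ) 1 x).toNNReal : ℝ) • Real.exp (s * x))
      = fun x => gammaPDFReal (k : ℝ) 1 x * Real.exp (s * x) := by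
    funext x
    rw [smul_eq_mul, Real.coe_toNNReal _ (gammaPDFReal_nonneg hkpos one_pos x)]
  rw [h1]
  have hbase : IntegrableOn (fun x : ℝ => x ^ ((k:ℝ) - 1) * Real.exp (-(1-s) * x))
      (Ioi 0) volume := by
    have := integrableOn_rpow_mul_exp_neg_mul_rpow (s := (k:ℝ) - 1) (p := 1) (b := 1 - s)
      (by push_cast; linarith) one_pos h1s
    simpa [Real.rpow_one] using this
  have hIoi : IntegrableOn (fun x => gammaPDFReal (k : ℝ) 1 x * Real.exp (s * x))
      (Ioi 0) volume := by
    refine MeasureTheory.IntegrableOn.congr_fun (hbase.const_mul ((Real.Gamma k)⁻¹))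
      ?_ measurableSet_Ioi
    intro x hx
    simp only [mc_gammaPDFReal_on_pos hx]
    rw [mul_assoc, mul_assoc, ← Real.exp_add]
    ring_nf
  have hind : (fun x => gammaPDFReal (k : ℝ) 1 x * Real.exp (s * x))
      = Set.indicator (Ici (0:ℝ)) (fun x => gammaPDFReal (k : ℝ) 1 x * Real.exp (s * x)) := by
    funext x
    rcases le_or_gt 0 x with hx | hx
    · rw [Set.indicator_of_mem (by exact hx : x ∈ Ici (0:ℝ))]
    · rw [Set.indicator_of_notMem (by simpa using hx)]
      simp [gammaPDFReal, not_le.2 hx]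
  rw [hind, integrable_indicator_iff measurableSet_Ici]
  exact (integrableOn_Ici_iff_integrableOn_Ioi (hb := by finiteness)).2 hIoi

private lemma mc_integrable_id_gammaMeasure {k : ℕ} (hk : 1 ≤ k) :
    Integrable (fun x : ℝ => x) (gammaMeasure (k : ℝ) 1) := by
  have hkpos : (0:ℝ) < k := by exact_mod_cast hk
  have hmeas : Measurable fun x => (gammaPDFReal (k : ℝ) 1 x).toNNReal :=
    (measurable_gammaPDFReal _ _).real_toNNReal
  rw [mc_gammaMeasure_eq_withDensity, integrable_withDensity_iff_integrable_coe_smul hmeas]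
  have h1 : (fun x => ((gammaPDFReal (k : ℝ) 1 x).toNNReal : ℝ) • x)
      = fun x => gammaPDFReal (k : ℝ) 1 x * x := by
    funext x
    rw [smul_eq_mul, Real.coe_toNNReal _ (gammaPDFReal_nonneg hkpos one_pos x)]
  rw [h1]
  have hbase : IntegrableOn (fun x : ℝ => x ^ ((k:ℝ)) * Real.exp (-1 * x)) (Ioi 0) volume := by
    have := integrableOn_rpow_mul_exp_neg_mul_rpow (s := (k:ℝ)) (p := 1) (b := 1)
      (by linarith) one_pos one_pos
    simpa [Real.rpow_one] using this
  have hIoi : IntegrableOn (fun x => gammaPDFReal (k : ℝ) 1 x * x) (Ioi 0) volume := by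
    refine MeasureTheory.IntegrableOn.congr_fun (hbase.const_mul ((Real.Gamma k)⁻¹))
      ?_ measurableSet_Ioi
    intro x hx
    simp only [mc_gammaPDFReal_on_pos hx]
    have hxk : x ^ ((k:ℝ)) = x ^ ((k:ℝ) - 1) * x := by
      have h := Real.rpow_add hx ((k:ℝ) - 1) 1
      rw [Real.rpow_one, show ((k:ℝ) - 1) + 1 = (k:ℝ) by ring] at h
      exact h
    rw [neg_one_mul, hxk]
    ring
  have hind : (fun x => gammaPDFReal (k : ℝ) 1 x * x)
      = Set.indicator (Ici (0:ℝ)) (fun x => gammaPDFReal (k : ℝ) 1 x * x) := by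
    funext x
    rcases le_or_gt 0 x with hx | hx
    · rw [Set.indicator_of_mem (by exact hx : x ∈ Ici (0:ℝ))]
    · rw [Set.indicator_of_notMem (by simpa using hx)]
      simp [gammaPDFReal, not_le.2 hx]
  rw [hind, integrable_indicator_iff measurableSet_Ici]
  exact (integrableOn_Ici_iff_integrableOn_Ioi (hb := by finiteness)).2 hIoi

private lemma mc_integral_id_gammaMeasure {k : ℕ} (hk : 1 ≤ k) :
    ∫ x, x ∂(gammaMeasure (k : ℝ) 1) = k := by
  have hkpos : (0:ℝ) < k := by exact_mod_cast hk
  have hΓ : (0:ℝ) < Real.Gamma k := Real.Gamma_pos_of_pos hkpos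
  rw [mc_integral_gammaMeasure_eq hk]
  have hcong : ∀ x ∈ Ioi (0:ℝ), gammaPDFReal (k : ℝ) 1 x * x
      = (Real.Gamma k)⁻¹ * (x ^ (((k:ℝ) + 1) - 1) * Real.exp (-(1 * x))) := by
    intro x hx
    rw [mc_gammaPDFReal_on_pos hx]
    have hxk : x ^ (((k:ℝ) + 1) - 1) = x ^ ((k:ℝ) - 1) * x := by
      have h := Real.rpow_add hx ((k:ℝ) - 1) 1
      rw [Real.rpow_one, show ((k:ℝ) - 1) + 1 = ((k:ℝ) + 1) - 1 by ring] at h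
      exact h
    rw [one_mul, hxk]
    ring
  rw [setIntegral_congr_fun measurableSet_Ioi hcong]
  rw [MeasureTheory.integral_const_mul,
    Real.integral_rpow_mul_exp_neg_mul_Ioi (by linarith) one_pos]
  rw [Real.Gamma_add_one hkpos.ne']
  simp
  field_simp

end GammaFacts

set_option maxHeartbeats 2000000 in
/-- Concentration of the Monte Carlo estimator `β̂ = (1/(Mkh))·∑ᵢ Lᵢ` of
`β̄ = E[L₁]/(kh)`, where `Lᵢ = Gᵢ + Bᵢ` with `(Gᵢ, Bᵢ)` i.i.d., `G₁ ~ Gamma(k, 1)`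
and `0 ≤ B₁ ≤ k·h²` a.s.  For `δ ∈ (0,1)`, `t = log(4/δ)` and
`ε = (1/(kh))·(√(2kt/M) + t/M + kh²·√(t/(2M)))`, we have `P(|β̂ − β̄| ≥ ε) ≤ δ`. -/
theorem monte_carlo_concentration
    {Ω : Type*} [MeasurableSpace Ω] (μ : Measure Ω) [IsProbabilityMeasure μ]
    (k M : ℕ) (hk : 1 ≤ k) (hM : 1 ≤ M) (h : ℝ) (hh : 0 < h)
    (G B : Fin M → Ω → ℝ)
    (hmeas : ∀ i, Measurable fun ω => (G i ω, B i ω))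
    (hindep : iIndepFun (fun i ω => (G i ω, B i ω)) μ)
    (hident : ∀ i, Measure.map (fun ω => (G i ω, B i ω)) μ =
      Measure.map (fun ω => (G ⟨0, hM⟩ ω, B ⟨0, hM⟩ ω)) μ)
    (hG : Measure.map (G ⟨0, hM⟩) μ = gammaMeasure k 1)
    (hB : ∀ᵐ ω ∂μ, 0 ≤ B ⟨0, hM⟩ ω ∧ B ⟨0, hM⟩ ω ≤ k * h ^ 2)
    (δ : ℝ) (hδ : δ ∈ Set.Ioo (0 : ℝ) 1)
    (t ε : ℝ) (ht : t = Real.log (4 / δ))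
    (hε : ε = (1 / (k * h)) *
      (Real.sqrt (2 * k * t / M) + t / M + k * h ^ 2 * Real.sqrt (t / (2 * M)))) :
    μ {ω | ε ≤ |(1 / (M * k * h)) * (∑ i : Fin M, (G i ω + B i ω)) -
        (∫ ω', (G ⟨0, hM⟩ ω' + B ⟨0, hM⟩ ω') ∂μ) / (k * h)|} ≤ ENNReal.ofReal δ := by
  classical
  obtain ⟨hδ0, hδ1⟩ := hδ
  have hkR : (0:ℝ) < k := by exact_mod_cast hk
  have hMR : (0:ℝ) < M := by exact_mod_cast hM
  have htpos : 0 < t := by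
    rw [ht]; apply Real.log_pos; rw [lt_div_iff₀ hδ0]; linarith
  set i0 : Fin M := ⟨0, hM⟩ with hi0
  set c : ℝ := (k:ℝ) * h ^ 2 with hcdef
  have hcpos : 0 < c := by positivity
  set v : ℝ := (M:ℝ) * (k:ℝ) with hvdef
  have hvpos : 0 < v := by positivity
  set u : ℝ := Real.sqrt (2 * t / v) with hudef
  have hupos : 0 < u := Real.sqrt_pos.2 (by positivity)
  have hu2 : u ^ 2 = 2 * t / v := Real.sq_sqrt (by positivity)
  set w : ℝ := Real.sqrt ((M:ℝ) * t / 2) with hwdef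
  have hwpos : 0 < w := Real.sqrt_pos.2 (by positivity)
  have hw2 : w ^ 2 = (M:ℝ) * t / 2 := Real.sq_sqrt (by positivity)
  -- measurability
  have hGmeas : ∀ i, Measurable (G i) := fun i => (measurable_fst.comp (hmeas i))
  have hBmeas : ∀ i, Measurable (B i) := fun i => (measurable_snd.comp (hmeas i))
  -- identical laws
  have lawG : ∀ i, Measure.map (G i) μ = gammaMeasure (k:ℝ) 1 := by
    intro i
    have h1 : Measure.map (G i) μ
        = Measure.map Prod.fst (Measure.map (fun ω => (G i ω, B i ω)) μ) := by
      rw [Measure.map_map measurable_fst (hmeas i)]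
      rfl
    rw [h1, hident i, Measure.map_map measurable_fst (hmeas i0)]
    exact hG
  have lawB : ∀ i, Measure.map (B i) μ = Measure.map (B i0) μ := by
    intro i
    have h1 : ∀ j : Fin M, Measure.map (B j) μ
        = Measure.map Prod.snd (Measure.map (fun ω => (G j ω, B j ω)) μ) := by
      intro j
      rw [Measure.map_map measurable_snd (hmeas j)]
      rfl
    rw [h1 i, hident i, ← h1 i0]
  -- facts about G
  have mgfG : ∀ i, ∀ s : ℝ, s < 1 → mgf (G i) μ s = ((1 - s)⁻¹) ^ k := by
    intro i s hs
    have h1 : ∫ x, Real.exp (s * x) ∂(Measure.map (G i) μ) = ∫ ω, Real.exp (s * G i ω) ∂μ :=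
      integral_map (hGmeas i).aemeasurable
        (Measurable.aestronglyMeasurable (by fun_prop))
    rw [mgf, ← h1, lawG i, mc_mgf_gammaMeasure hk hs]
  have intExpG : ∀ i, ∀ s : ℝ, s < 1 → Integrable (fun ω => Real.exp (s * G i ω)) μ := by
    intro i s hs
    have h1 := mc_integrable_exp_gammaMeasure hk hs
    rw [← lawG i] at h1
    exact (integrable_map_measure (Measurable.aestronglyMeasurable (by fun_prop))
      (hGmeas i).aemeasurable).mp h1
  have intG : ∀ i, Integrable (G i) μ := by
    intro i
    have h1 := mc_integrable_id_gammaMeasure hk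
    rw [← lawG i] at h1
    exact (integrable_map_measure (Measurable.aestronglyMeasurable (by fun_prop))
      (hGmeas i).aemeasurable).mp h1
  have EG : ∀ i, μ[G i] = (k:ℝ) := by
    intro i
    have h1 : ∫ x, x ∂(Measure.map (G i) μ) = ∫ ω, G i ω ∂μ :=
      integral_map (hGmeas i).aemeasurable
        (Measurable.aestronglyMeasurable (by fun_prop))
    rw [← h1, lawG i, mc_integral_id_gammaMeasure hk]
  -- facts about B
  have hBbd0 : ∀ᵐ ω ∂μ, B i0 ω ∈ Set.Icc 0 c := by
    filter_upwards [hB] with ω hω using ⟨hω.1, hω.2⟩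
  have hBbd : ∀ i, ∀ᵐ ω ∂μ, B i ω ∈ Set.Icc 0 c := by
    intro i
    have h0 : ∀ᵐ x ∂(Measure.map (B i0) μ), x ∈ Set.Icc (0:ℝ) c :=
      (MeasureTheory.ae_map_iff (hBmeas i0).aemeasurable measurableSet_Icc).2 hBbd0
    rw [← lawB i] at h0
    exact (MeasureTheory.ae_map_iff (hBmeas i).aemeasurable measurableSet_Icc).1 h0
  have intB : ∀ i, Integrable (B i) μ := by
    intro i
    refine Integrable.mono' (integrable_const c) (hBmeas i).aestronglyMeasurable ?_
    filter_upwards [hBbd i] with ω hω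
    rw [Real.norm_eq_abs, abs_le]
    exact ⟨by linarith [hω.1, hcpos], hω.2⟩
  set mB : ℝ := μ[B i0] with hmBdef
  have EB : ∀ i, μ[B i] = mB := by
    intro i
    have h1 : ∫ x, x ∂(Measure.map (B i) μ) = ∫ ω, B i ω ∂μ :=
      integral_map (hBmeas i).aemeasurable
        (Measurable.aestronglyMeasurable (by fun_prop))
    have h2 : ∫ x, x ∂(Measure.map (B i0) μ) = ∫ ω, B i0 ω ∂μ :=
      integral_map (hBmeas i0).aemeasurable
        (Measurable.aestronglyMeasurable (by fun_prop))
    rw [hmBdef, ← h1, ← h2, lawB i]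
  have mgfB : ∀ i, ∀ s : ℝ, mgf (B i) μ s ≤ Real.exp (s * mB + s ^ 2 * c ^ 2 / 8) := by
    intro i s
    have h1 := mc_mgf_le_hoeffding (hBmeas i) (a := 0) (b := c) hcpos (hBbd i) s
    rw [EB i] at h1
    simpa using h1
  have intExpB : ∀ i, ∀ s : ℝ, Integrable (fun ω => Real.exp (s * B i ω)) μ := by
    intro i s
    refine Integrable.mono' (integrable_const (max 1 (Real.exp (s * c))))
      (((hBmeas i).const_mul s).exp).aestronglyMeasurable ?_
    filter_upwards [hBbd i] with ω hω
    rw [Real.norm_eq_abs, abs_of_pos (Real.exp_pos _)]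
    rcases le_or_gt 0 s with hs | hs
    · refine le_max_of_le_right (Real.exp_le_exp.2 ?_)
      nlinarith [hω.2]
    · refine le_max_of_le_left ?_
      rw [show (1:ℝ) = Real.exp 0 by simp]
      refine Real.exp_le_exp.2 ?_
      nlinarith [hω.1]
  -- independence
  have hindepG : iIndepFun G μ := by
    have h1 := hindep.comp (fun _ => (Prod.fst : ℝ × ℝ → ℝ)) (fun _ => measurable_fst)
    exact h1
  have hindepB : iIndepFun B μ := by
    have h1 := hindep.comp (fun _ => (Prod.snd : ℝ × ℝ → ℝ)) (fun _ => measurable_snd)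
    exact h1
  -- mgf of sums
  have mgfSg : ∀ s : ℝ, s < 1 → mgf (∑ i : Fin M, G i) μ s = ((1 - s)⁻¹) ^ (k * M) := by
    intro s hs
    rw [iIndepFun.mgf_sum hindepG hGmeas Finset.univ]
    have h1 : ∀ i : Fin M, mgf (G i) μ s = ((1 - s)⁻¹) ^ k := fun i => mgfG i s hs
    rw [Finset.prod_congr rfl (fun i _ => h1 i), Finset.prod_const, Finset.card_univ,
      Fintype.card_fin, ← pow_mul]
  have mgfSb_le : ∀ s : ℝ, mgf (∑ i : Fin M, B i) μ s
      ≤ Real.exp ((M:ℝ) * (s * mB + s ^ 2 * c ^ 2 / 8)) := by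
    intro s
    rw [iIndepFun.mgf_sum hindepB hBmeas Finset.univ]
    calc ∏ i : Fin M, mgf (B i) μ s
        ≤ ∏ _i : Fin M, Real.exp (s * mB + s ^ 2 * c ^ 2 / 8) :=
          Finset.prod_le_prod (fun i _ => mgf_nonneg) (fun i _ => mgfB i s)
      _ = Real.exp ((M:ℝ) * (s * mB + s ^ 2 * c ^ 2 / 8)) := by
          rw [Finset.prod_const, Finset.card_univ, Fintype.card_fin, ← Real.exp_nat_mul]
  -- tail 1 : upper tail of the Gamma part
  have hE1 : μ {ω | v + (v * u + t) ≤ (∑ i : Fin M, G i) ω} ≤ ENNReal.ofReal (Real.exp (-t)) := by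
    set lam : ℝ := u / (1 + u) with hlam
    have h1u : (0:ℝ) < 1 + u := by linarith
    have hlam0 : 0 ≤ lam := by positivity
    have hlam1 : lam < 1 := by rw [hlam, div_lt_one h1u]; linarith
    have hint : Integrable (fun ω => Real.exp (lam * (∑ i : Fin M, G i) ω)) μ :=
      iIndepFun.integrable_exp_mul_sum hindepG hGmeas (fun i _ => intExpG i _ hlam1)
    have chern := measure_ge_le_exp_mul_mgf (μ := μ) (X := ∑ i : Fin M, G i) (t := lam)
      (v + (v * u + t)) hlam0 hint
    rw [mgfSg lam hlam1] at chern
    have hL : (0:ℝ) < (1 - lam)⁻¹ := by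
      rw [inv_pos]; linarith
    have hRHS : Real.exp (-lam * (v + (v * u + t))) * ((1 - lam)⁻¹) ^ (k * M)
        ≤ Real.exp (-t) := by
      rw [show ((1 - lam)⁻¹) ^ (k * M) = Real.exp (((k * M : ℕ) : ℝ) * Real.log ((1 - lam)⁻¹))
        by rw [← Real.log_pow, Real.exp_log (pow_pos hL _)], ← Real.exp_add]
      apply Real.exp_le_exp.2
      have hlog : Real.log ((1 - lam)⁻¹) ≤ lam + lam ^ 2 / (2 * (1 - lam)) := by
        rw [Real.log_inv]
        have := mc_ineqA hlam0 hlam1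
        linarith
      have hcast : ((k * M : ℕ) : ℝ) = v := by rw [hvdef]; push_cast; ring
      rw [hcast]
      have hvt : t = v * u ^ 2 / 2 := by rw [hu2]; field_simp
      have step : -lam * (v + (v * u + t)) + v * Real.log ((1 - lam)⁻¹)
          ≤ -lam * (v + (v * u + t)) + v * (lam + lam ^ 2 / (2 * (1 - lam))) := by
        have := mul_le_mul_of_nonneg_left hlog hvpos.le
        linarith
      refine step.trans (le_of_eq ?_)
      have h1mlam : 1 - lam = 1 / (1 + u) := by rw [hlam]; field_simp; ring
      rw [h1mlam, hlam, hvt]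
      field_simp
      ring
    rw [← ENNReal.ofReal_toReal (measure_ne_top μ _)]
    exact ENNReal.ofReal_le_ofReal (le_trans chern hRHS)
  -- tail 2 : lower tail of the Gamma part
  have hE2 : μ {ω | (∑ i : Fin M, G i) ω ≤ v - (v * u + t)} ≤ ENNReal.ofReal (Real.exp (-t)) := by
    have hu1 : -u < 1 := by linarith
    have hint : Integrable (fun ω => Real.exp (-u * (∑ i : Fin M, G i) ω)) μ :=
      iIndepFun.integrable_exp_mul_sum hindepG hGmeas (fun i _ => intExpG i _ hu1)
    have chern := measure_le_le_exp_mul_mgf (μ := μ) (X := ∑ i : Fin M, G i) (t := -u)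
      (v - (v * u + t)) (by linarith) hint
    rw [mgfSg (-u) hu1] at chern
    have h1u : (0:ℝ) < 1 + u := by linarith
    have hL : (0:ℝ) < (1 - -u)⁻¹ := by rw [inv_pos]; linarith
    have hRHS : Real.exp (-(-u) * (v - (v * u + t))) * ((1 - -u)⁻¹) ^ (k * M)
        ≤ Real.exp (-t) := by
      rw [show ((1 - -u)⁻¹) ^ (k * M) = Real.exp (((k * M : ℕ) : ℝ) * Real.log ((1 - -u)⁻¹))
        by rw [← Real.log_pow, Real.exp_log (pow_pos hL _)], ← Real.exp_add]
      apply Real.exp_le_exp.2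
      have hcast : ((k * M : ℕ) : ℝ) = v := by rw [hvdef]; push_cast; ring
      rw [hcast]
      have hlog : Real.log ((1 - -u)⁻¹) ≤ u ^ 2 / 2 - u := by
        rw [show (1 : ℝ) - -u = 1 + u by ring, Real.log_inv]
        have := mc_ineqB hupos.le
        linarith
      have hvu2 : v * u ^ 2 = 2 * t := by rw [hu2]; field_simp
      have step : -(-u) * (v - (v * u + t)) + v * Real.log ((1 - -u)⁻¹)
          ≤ -(-u) * (v - (v * u + t)) + v * (u ^ 2 / 2 - u) := by
        have := mul_le_mul_of_nonneg_left hlog hvpos.le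
        linarith
      refine step.trans ?_
      nlinarith [mul_pos htpos hupos]
    rw [← ENNReal.ofReal_toReal (measure_ne_top μ _)]
    exact ENNReal.ofReal_le_ofReal (le_trans chern hRHS)
  -- tail 3 : upper tail of the bounded part
  set s3 : ℝ := 4 * w / ((M:ℝ) * c) with hs3def
  have hs3pos : 0 < s3 := by positivity
  have hE3 : μ {ω | (M:ℝ) * mB + c * w ≤ (∑ i : Fin M, B i) ω}
      ≤ ENNReal.ofReal (Real.exp (-t)) := by
    have hint : Integrable (fun ω => Real.exp (s3 * (∑ i : Fin M, B i) ω)) μ :=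
      iIndepFun.integrable_exp_mul_sum hindepB hBmeas (fun i _ => intExpB i _)
    have chern := measure_ge_le_exp_mul_mgf (μ := μ) (X := ∑ i : Fin M, B i) (t := s3)
      ((M:ℝ) * mB + c * w) hs3pos.le hint
    have hRHS : Real.exp (-s3 * ((M:ℝ) * mB + c * w)) * mgf (∑ i : Fin M, B i) μ s3
        ≤ Real.exp (-t) := by
      calc Real.exp (-s3 * ((M:ℝ) * mB + c * w)) * mgf (∑ i : Fin M, B i) μ s3
          ≤ Real.exp (-s3 * ((M:ℝ) * mB + c * w))
            * Real.exp ((M:ℝ) * (s3 * mB + s3 ^ 2 * c ^ 2 / 8)) :=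
            mul_le_mul_of_nonneg_left (mgfSb_le s3) (Real.exp_pos _).le
        _ = Real.exp (-t) := by
            rw [← Real.exp_add]
            congr 1
            have ht3 : t = 2 * w ^ 2 / (M:ℝ) := by rw [hw2]; field_simp
            rw [hs3def, ht3]
            field_simp
            ring
    rw [← ENNReal.ofReal_toReal (measure_ne_top μ _)]
    exact ENNReal.ofReal_le_ofReal (le_trans chern hRHS)
  -- tail 4 : lower tail of the bounded part
  have hE4 : μ {ω | (∑ i : Fin M, B i) ω ≤ (M:ℝ) * mB - c * w}
      ≤ ENNReal.ofReal (Real.exp (-t)) := by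
    have hint : Integrable (fun ω => Real.exp (-s3 * (∑ i : Fin M, B i) ω)) μ :=
      iIndepFun.integrable_exp_mul_sum hindepB hBmeas (fun i _ => intExpB i _)
    have chern := measure_le_le_exp_mul_mgf (μ := μ) (X := ∑ i : Fin M, B i) (t := -s3)
      ((M:ℝ) * mB - c * w) (by linarith) hint
    have hRHS : Real.exp (-(-s3) * ((M:ℝ) * mB - c * w)) * mgf (∑ i : Fin M, B i) μ (-s3)
        ≤ Real.exp (-t) := by
      calc Real.exp (-(-s3) * ((M:ℝ) * mB - c * w)) * mgf (∑ i : Fin M, B i) μ (-s3)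
          ≤ Real.exp (-(-s3) * ((M:ℝ) * mB - c * w))
            * Real.exp ((M:ℝ) * ((-s3) * mB + (-s3) ^ 2 * c ^ 2 / 8)) :=
            mul_le_mul_of_nonneg_left (mgfSb_le (-s3)) (Real.exp_pos _).le
        _ = Real.exp (-t) := by
            rw [← Real.exp_add]
            congr 1
            have ht3 : t = 2 * w ^ 2 / (M:ℝ) := by rw [hw2]; field_simp
            rw [hs3def, ht3]
            field_simp
            ring
    rw [← ENNReal.ofReal_toReal (measure_ne_top μ _)]
    exact ENNReal.ofReal_le_ofReal (le_trans chern hRHS)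
  -- threshold arithmetic
  have hMkhε : ε * ((M:ℝ) * (k:ℝ) * h) = (v * u + t) + c * w := by
    have hsq : ∀ A x : ℝ, 0 ≤ A → A * Real.sqrt x = Real.sqrt (A ^ 2 * x) := by
      intro A x hA
      rw [Real.sqrt_mul (sq_nonneg A), Real.sqrt_sq hA]
    have e1 : (M:ℝ) * Real.sqrt (2 * k * t / M) = v * u := by
      rw [hsq (M:ℝ) _ hMR.le, hudef, hsq v _ hvpos.le]
      congr 1
      rw [hvdef]
      field_simp
    have e2 : (M:ℝ) * Real.sqrt (t / (2 * M)) = w := by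
      rw [hsq (M:ℝ) _ hMR.le, hwdef]
      congr 1
      field_simp
    have key : ∀ S1 S2 : ℝ, (1 / ((k:ℝ) * h) * (S1 + t / (M:ℝ) + c * S2)) * ((M:ℝ) * (k:ℝ) * h)
        = (M:ℝ) * S1 + t + c * ((M:ℝ) * S2) := by
      intro S1 S2
      field_simp
    rw [hε, key, e1, e2]
  -- event inclusion
  have hEL : (∫ ω', (G i0 ω' + B i0 ω') ∂μ) = (k:ℝ) + mB := by
    rw [integral_add (intG i0) (intB i0), EG i0, hmBdef]
  have hsub : {ω | ε ≤ |(1 / ((M:ℝ) * (k:ℝ) * h)) * (∑ i : Fin M, (G i ω + B i ω)) -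
        (∫ ω', (G i0 ω' + B i0 ω') ∂μ) / ((k:ℝ) * h)|} ⊆
      {ω | v + (v * u + t) ≤ (∑ i : Fin M, G i) ω} ∪
      ({ω | (∑ i : Fin M, G i) ω ≤ v - (v * u + t)} ∪
      ({ω | (M:ℝ) * mB + c * w ≤ (∑ i : Fin M, B i) ω} ∪
       {ω | (∑ i : Fin M, B i) ω ≤ (M:ℝ) * mB - c * w})) := by
    intro ω hω
    simp only [Set.mem_setOf_eq] at hω
    by_contra hn
    simp only [Set.mem_union, Set.mem_setOf_eq, not_or, not_le, Finset.sum_apply] at hn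
    obtain ⟨h1, h2, h3, h4⟩ := hn
    rw [hEL] at hω
    have hsum : (∑ i : Fin M, (G i ω + B i ω))
        = (∑ i : Fin M, G i ω) + ∑ i : Fin M, B i ω := Finset.sum_add_distrib
    rw [hsum] at hω
    set Sg : ℝ := ∑ i : Fin M, G i ω with hSg
    set Sb : ℝ := ∑ i : Fin M, B i ω with hSb
    have hden : (0:ℝ) < (M:ℝ) * (k:ℝ) * h := by positivity
    have hrw : (1 / ((M:ℝ) * (k:ℝ) * h)) * (Sg + Sb) - ((k:ℝ) + mB) / ((k:ℝ) * h)
        = (Sg + Sb - (M:ℝ) * ((k:ℝ) + mB)) / ((M:ℝ) * (k:ℝ) * h) := by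
      field_simp
    rw [hrw, abs_div, abs_of_pos hden, le_div_iff₀ hden] at hω
    rw [hMkhε] at hω
    have hvM : (M:ℝ) * ((k:ℝ) + mB) = v + (M:ℝ) * mB := by rw [hvdef]; ring
    rcases abs_cases (Sg + Sb - (M:ℝ) * ((k:ℝ) + mB)) with ⟨heq, _⟩ | ⟨heq, _⟩ <;>
      rw [heq] at hω <;> linarith
  -- put everything together
  have hunion : μ {ω | ε ≤ |(1 / ((M:ℝ) * (k:ℝ) * h)) * (∑ i : Fin M, (G i ω + B i ω)) -
        (∫ ω', (G i0 ω' + B i0 ω') ∂μ) / ((k:ℝ) * h)|}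
      ≤ ENNReal.ofReal (Real.exp (-t)) + (ENNReal.ofReal (Real.exp (-t))
        + (ENNReal.ofReal (Real.exp (-t)) + ENNReal.ofReal (Real.exp (-t)))) := by
    refine le_trans (measure_mono hsub) ?_
    refine le_trans (measure_union_le _ _) ?_
    refine add_le_add hE1 ?_
    refine le_trans (measure_union_le _ _) ?_
    refine add_le_add hE2 ?_
    refine le_trans (measure_union_le _ _) ?_
    exact add_le_add hE3 hE4
  have hexp : Real.exp (-t) = δ / 4 := by
    rw [ht, Real.exp_neg, Real.exp_log (by positivity), inv_div]
  have hfour : ENNReal.ofReal (Real.exp (-t)) + (ENNReal.ofReal (Real.exp (-t))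
      + (ENNReal.ofReal (Real.exp (-t)) + ENNReal.ofReal (Real.exp (-t))))
      = ENNReal.ofReal δ := by
    rw [hexp, ← ENNReal.ofReal_add (by positivity) (by positivity),
      ← ENNReal.ofReal_add (by positivity) (by positivity),
      ← ENNReal.ofReal_add (by positivity) (by positivity)]
    congr 1
    ring
  calc μ {ω | ε ≤ |(1 / ((M:ℝ) * (k:ℝ) * h)) * (∑ i : Fin M, (G i ω + B i ω)) -
        (∫ ω', (G i0 ω' + B i0 ω') ∂μ) / ((k:ℝ) * h)|}
      ≤ _ := hunion
    _ = ENNReal.ofReal δ := hfour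
end

section
/- Let a > 0 and let X be a real random variable with the Gamma distribution of shape a and rate 1, so that E[X] = a. Then for every t > 0, P( |X − a| ≥ √(2at) + t ) ≤ 2·e^{−t}. -/
open MeasureTheory ProbabilityTheory

open Real Filter Topology
open scoped ENNReal NNReal

section GammaAux


-- MGF of gamma
lemma gamma_mgf {a : ℝ} (ha : 0 < a) {θ : ℝ} (hθ : θ < 1) :
    ∫⁻ x, ENNReal.ofReal (exp (θ * x)) ∂(gammaMeasure a 1) =
      ENNReal.ofReal ((1 - θ) ^ (-a)) := by
  have h1θ : 0 < 1 - θ := by linarith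
  have hm : Measurable (gammaPDF a 1) := (measurable_gammaPDFReal a 1).ennreal_ofReal
  rw [gammaMeasure, lintegral_withDensity_eq_lintegral_mul _ hm
    (by fun_prop : Measurable fun x => ENNReal.ofReal (exp (θ * x)))]
  have key : ∀ x : ℝ, (gammaPDF a 1 * fun x => ENNReal.ofReal (exp (θ * x))) x =
      ENNReal.ofReal ((1 - θ) ^ (-a)) * gammaPDF a (1 - θ) x := by
    intro x
    simp only [Pi.mul_apply]
    rcases lt_or_ge x 0 with hx | hx
    · rw [gammaPDF_of_neg hx, gammaPDF_of_neg hx, zero_mul, mul_zero]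
    · rw [gammaPDF_of_nonneg hx, gammaPDF_of_nonneg hx,
        ← ENNReal.ofReal_mul (by positivity), ← ENNReal.ofReal_mul (by positivity)]
      congr 1
      rw [Real.one_rpow]
      rw [show (1 - θ) ^ (-a) * ((1 - θ) ^ a / Gamma a * x ^ (a - 1) * exp (-((1 - θ) * x)))
          = ((1 - θ) ^ (-a) * (1 - θ) ^ a) * (1 / Gamma a * x ^ (a - 1) * exp (-((1 - θ) * x)))
          by ring]
      rw [← Real.rpow_add h1θ, neg_add_cancel, Real.rpow_zero]
      rw [show -((1 - θ) * x) = θ * x + -(1 * x) by ring, Real.exp_add]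
      ring
  simp_rw [key]
  have hm2 : Measurable (gammaPDF a (1 - θ)) := (measurable_gammaPDFReal a (1 - θ)).ennreal_ofReal
  rw [lintegral_const_mul _ hm2, lintegral_gammaPDF_eq_one ha h1θ, mul_one]


lemma aux_exp_le {x : ℝ} (hx : 0 ≤ x) : exp (x - x ^ 2 / 2) ≤ 1 + x := by
  have hd : ∀ y : ℝ, HasDerivAt (fun y => (1 + y) * exp (y ^ 2 / 2 - y))
      (y ^ 2 * exp (y ^ 2 / 2 - y)) y := by
    intro y
    have h1 : HasDerivAt (fun y : ℝ => 1 + y) 1 y := (hasDerivAt_id y).const_add 1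
    have h2 : HasDerivAt (fun y : ℝ => y ^ 2 / 2 - y) (y - 1) y := by
      have := ((hasDerivAt_pow 2 y).div_const 2).sub (hasDerivAt_id y)
      refine this.congr_deriv ?_
      simp
    have := h1.mul h2.exp
    refine this.congr_deriv ?_
    ring
  have hmono : Monotone (fun y : ℝ => (1 + y) * exp (y ^ 2 / 2 - y)) :=
    monotone_of_deriv_nonneg (fun y => (hd y).differentiableAt)
      (fun y => by rw [(hd y).deriv]; positivity)
  have h0 : (1 : ℝ) ≤ (1 + x) * exp (x ^ 2 / 2 - x) := by
    have := hmono hx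
    simpa using this
  have hep : 0 < exp (x ^ 2 / 2 - x) := exp_pos _
  calc exp (x - x ^ 2 / 2) = exp (x - x ^ 2 / 2) * 1 := (mul_one _).symm
    _ ≤ exp (x - x ^ 2 / 2) * ((1 + x) * exp (x ^ 2 / 2 - x)) := by
        exact mul_le_mul_of_nonneg_left h0 (exp_pos _).le
    _ = (1 + x) * exp ((x - x ^ 2 / 2) + (x ^ 2 / 2 - x)) := by rw [Real.exp_add]; ring
    _ = 1 + x := by norm_num

lemma aux_log {x : ℝ} (hx : 0 ≤ x) : x - x ^ 2 / 2 ≤ Real.log (1 + x) := by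
  rw [Real.le_log_iff_exp_le (by linarith)]
  exact aux_exp_le hx

lemma gamma_chernoff_ge {a : ℝ} (ha : 0 < a) {l : ℝ} (hl : 0 < l) (hl1 : l < 1) (c : ℝ) :
    gammaMeasure a 1 {x | c ≤ x} ≤ ENNReal.ofReal (exp (-(l * c)) * (1 - l) ^ (-a)) := by
  calc gammaMeasure a 1 {x | c ≤ x}
      = ∫⁻ _ in {x | c ≤ x}, 1 ∂(gammaMeasure a 1) := by rw [setLIntegral_one]
    _ ≤ ∫⁻ x in {x | c ≤ x}, ENNReal.ofReal (exp (l * (x - c))) ∂(gammaMeasure a 1) := by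
        refine setLIntegral_mono (by fun_prop) fun x hx => ?_
        rw [show (1 : ℝ≥0∞) = ENNReal.ofReal 1 by simp]
        exact ENNReal.ofReal_le_ofReal (Real.one_le_exp (by nlinarith [Set.mem_setOf.mp hx]))
    _ ≤ ∫⁻ x, ENNReal.ofReal (exp (l * (x - c))) ∂(gammaMeasure a 1) :=
        setLIntegral_le_lintegral _ _
    _ = ENNReal.ofReal (exp (-(l * c))) * ∫⁻ x, ENNReal.ofReal (exp (l * x)) ∂(gammaMeasure a 1) := by
        rw [← lintegral_const_mul' _ _ ENNReal.ofReal_ne_top]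
        congr 1 with x
        rw [← ENNReal.ofReal_mul (exp_pos _).le, ← Real.exp_add]
        ring_nf
    _ = ENNReal.ofReal (exp (-(l * c))) * ENNReal.ofReal ((1 - l) ^ (-a)) := by
        rw [gamma_mgf ha hl1]
    _ = ENNReal.ofReal (exp (-(l * c)) * (1 - l) ^ (-a)) := by
        rw [← ENNReal.ofReal_mul (exp_pos _).le]

lemma gamma_chernoff_le {a : ℝ} (ha : 0 < a) {l : ℝ} (hl : 0 < l) (c : ℝ) :
    gammaMeasure a 1 {x | x ≤ c} ≤ ENNReal.ofReal (exp (l * c) * (1 + l) ^ (-a)) := by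
  have hθ : -l < 1 := by linarith
  calc gammaMeasure a 1 {x | x ≤ c}
      = ∫⁻ _ in {x | x ≤ c}, 1 ∂(gammaMeasure a 1) := by rw [setLIntegral_one]
    _ ≤ ∫⁻ x in {x | x ≤ c}, ENNReal.ofReal (exp (l * (c - x))) ∂(gammaMeasure a 1) := by
        refine setLIntegral_mono (by fun_prop) fun x hx => ?_
        rw [show (1 : ℝ≥0∞) = ENNReal.ofReal 1 by simp]
        exact ENNReal.ofReal_le_ofReal (Real.one_le_exp (by nlinarith [Set.mem_setOf.mp hx]))
    _ ≤ ∫⁻ x, ENNReal.ofReal (exp (l * (c - x))) ∂(gammaMeasure a 1) :=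
        setLIntegral_le_lintegral _ _
    _ = ENNReal.ofReal (exp (l * c)) * ∫⁻ x, ENNReal.ofReal (exp (-l * x)) ∂(gammaMeasure a 1) := by
        rw [← lintegral_const_mul' _ _ ENNReal.ofReal_ne_top]
        congr 1 with x
        rw [← ENNReal.ofReal_mul (exp_pos _).le, ← Real.exp_add]
        ring_nf
    _ = ENNReal.ofReal (exp (l * c)) * ENNReal.ofReal ((1 + l) ^ (-a)) := by
        rw [gamma_mgf ha hθ, sub_neg_eq_add]
    _ = ENNReal.ofReal (exp (l * c) * (1 + l) ^ (-a)) := by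
        rw [← ENNReal.ofReal_mul (exp_pos _).le]

lemma gamma_upper_real {a t w : ℝ} (ha : 0 < a) (ht : 0 < t) (hw0 : 0 ≤ w)
    (hw2 : w ^ 2 = 2 * a * t) :
    exp (-((w + t) / (a + (w + t)) * (a + (w + t)))) * (1 - (w + t) / (a + (w + t))) ^ (-a)
      ≤ exp (-t) := by
  set v := w + t with hv
  have hv0 : 0 < v := by positivity
  have hav : 0 < a + v := by linarith
  have h1 : v / (a + v) * (a + v) = v := div_mul_cancel₀ _ hav.ne'
  have h2 : 1 - v / (a + v) = a / (a + v) := by field_simp; ring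
  rw [h1, h2]
  have hbase : (0 : ℝ) < a / (a + v) := by positivity
  rw [Real.rpow_def_of_pos hbase, ← Real.exp_add]
  apply Real.exp_le_exp.mpr
  have hlog : Real.log (a / (a + v)) = -Real.log ((a + v) / a) := by
    rw [Real.log_div ha.ne' hav.ne', Real.log_div hav.ne' ha.ne']; ring
  set r := w / a with hrdef
  have hr0 : 0 ≤ r := by positivity
  have hra : a * r = w := by rw [hrdef]; field_simp
  have hta : a * r ^ 2 = 2 * t := by
    have : a * r ^ 2 * a = 2 * a * t := by rw [hrdef]; field_simp; nlinarith [hw2]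
    have ha' := ha.ne'
    field_simp at this
    nlinarith [this]
  have hlogle : Real.log ((a + v) / a) ≤ r := by
    rw [Real.log_le_iff_le_exp (by positivity)]
    have he : (a + v) / a = 1 + r + r ^ 2 / 2 := by
      rw [hv, hrdef]
      field_simp
      nlinarith [hta, hra]
    rw [he]
    exact Real.quadratic_le_exp_of_nonneg hr0
  rw [hlog]
  nlinarith [mul_le_mul_of_nonneg_left hlogle ha.le]

lemma gamma_lower_real {a t w : ℝ} (ha : 0 < a) (ht : 0 < t) (hw0 : 0 ≤ w)
    (hw2 : w ^ 2 = 2 * a * t) :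
    exp (w / a * (a - w)) * (1 + w / a) ^ (-a) ≤ exp (-t) := by
  set r := w / a with hrdef
  have hr0 : 0 ≤ r := by positivity
  have h1r : (0 : ℝ) < 1 + r := by linarith
  rw [Real.rpow_def_of_pos h1r, ← Real.exp_add]
  apply Real.exp_le_exp.mpr
  have hlog := aux_log hr0
  have hra : a * r = w := by rw [hrdef]; field_simp
  have hta : a * r ^ 2 = 2 * t := by
    have h : a * r ^ 2 * a = 2 * a * t := by rw [hrdef]; field_simp; nlinarith [hw2]
    nlinarith [h]
  have hrw : r * w = 2 * t := by
    calc r * w = a * r ^ 2 := by rw [← hra]; ring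
      _ = 2 * t := hta
  nlinarith [mul_le_mul_of_nonneg_left hlog ha.le]

end GammaAux

/-- Concentration for a Gamma random variable: if `X ~ Gamma(a, 1)` (so `E[X] = a`),
then for every `t > 0`, `P(|X − a| ≥ √(2at) + t) ≤ 2e^{−t}`. -/
theorem gamma_concentration
    {Ω : Type*} [MeasurableSpace Ω] (μ : Measure Ω) [IsProbabilityMeasure μ]
    (a : ℝ) (ha : 0 < a)
    (X : Ω → ℝ) (hXmeas : Measurable X)
    (hX : Measure.map X μ = gammaMeasure a 1) :
    ∀ t : ℝ, 0 < t →
      μ {ω | Real.sqrt (2 * a * t) + t ≤ |X ω - a|} ≤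
        ENNReal.ofReal (2 * Real.exp (-t)) := by
  intro t ht
  set w := Real.sqrt (2 * a * t) with hwdef
  have hw0 : 0 ≤ w := Real.sqrt_nonneg _
  have hw2 : w ^ 2 = 2 * a * t := Real.sq_sqrt (by positivity)
  set v := w + t with hvdef
  have hv0 : 0 < v := by positivity
  have hav : 0 < a + v := by linarith
  -- event inclusion
  have hsub : {ω | v ≤ |X ω - a|} ⊆ {ω | a + v ≤ X ω} ∪ {ω | X ω ≤ a - w} := by
    intro ω hω
    rcases le_abs.mp (Set.mem_setOf.mp hω) with h | h
    · left; simp only [Set.mem_setOf_eq]; linarith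
    · right; simp only [Set.mem_setOf_eq]; linarith
  -- map the two events
  have hmapA : μ {ω | a + v ≤ X ω} = gammaMeasure a 1 {x | a + v ≤ x} := by
    show μ (X ⁻¹' Set.Ici (a + v)) = gammaMeasure a 1 (Set.Ici (a + v))
    rw [← hX, Measure.map_apply hXmeas measurableSet_Ici]
  have hmapB : μ {ω | X ω ≤ a - w} = gammaMeasure a 1 {x | x ≤ a - w} := by
    show μ (X ⁻¹' Set.Iic (a - w)) = gammaMeasure a 1 (Set.Iic (a - w))
    rw [← hX, Measure.map_apply hXmeas measurableSet_Iic]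
  have hA : μ {ω | a + v ≤ X ω} ≤ ENNReal.ofReal (exp (-t)) := by
    rw [hmapA]
    refine le_trans (gamma_chernoff_ge ha (l := v / (a + v)) (by positivity)
      ((div_lt_one hav).mpr (by linarith)) (a + v)) ?_
    exact ENNReal.ofReal_le_ofReal (gamma_upper_real ha ht hw0 hw2)
  have hB : μ {ω | X ω ≤ a - w} ≤ ENNReal.ofReal (exp (-t)) := by
    rw [hmapB]
    have hwpos : 0 < w := Real.sqrt_pos.mpr (by positivity)
    refine le_trans (gamma_chernoff_le ha (l := w / a) (by positivity) (a - w)) ?_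
    exact ENNReal.ofReal_le_ofReal (gamma_lower_real ha ht hw0 hw2)
  calc μ {ω | v ≤ |X ω - a|} ≤ μ ({ω | a + v ≤ X ω} ∪ {ω | X ω ≤ a - w}) := measure_mono hsub
    _ ≤ μ {ω | a + v ≤ X ω} + μ {ω | X ω ≤ a - w} := measure_union_le _ _
    _ ≤ ENNReal.ofReal (exp (-t)) + ENNReal.ofReal (exp (-t)) := add_le_add hA hB
    _ = ENNReal.ofReal (2 * exp (-t)) := by
        rw [← ENNReal.ofReal_add (exp_pos _).le (exp_pos _).le]; congr 1; ring
end

section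
/- For all real numbers A, B, C, D ≥ 0, the triangle excess in the Case 1 configuration satisfies √(A² + (C+D)²) + √(C² + B²) − √(D² + (A+B)²) ≥ √2·C − ((√2 − 1)/√2)·(A + B). -/
lemma key_mono (A C D E : ℝ) (hA : 0 ≤ A) (hC : 0 ≤ C) (hD : 0 ≤ D) (hAE : A ≤ E) :
    Real.sqrt (A ^ 2 + C ^ 2) + Real.sqrt (D ^ 2 + E ^ 2) ≤
      Real.sqrt (A ^ 2 + (C + D) ^ 2) + E := by
  have hE : 0 ≤ E := hA.trans hAE
  set s1 := Real.sqrt (A ^ 2 + (C + D) ^ 2) with hs1def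
  set s2 := Real.sqrt (A ^ 2 + C ^ 2) with hs2def
  set s3 := Real.sqrt (D ^ 2 + E ^ 2) with hs3def
  have h1 : s1 ^ 2 = A ^ 2 + (C + D) ^ 2 := Real.sq_sqrt (by positivity)
  have h2 : s2 ^ 2 = A ^ 2 + C ^ 2 := Real.sq_sqrt (by positivity)
  have h3 : s3 ^ 2 = D ^ 2 + E ^ 2 := Real.sq_sqrt (by positivity)
  have hn1 : 0 ≤ s1 := Real.sqrt_nonneg _
  have hn2 : 0 ≤ s2 := Real.sqrt_nonneg _
  have hn3 : 0 ≤ s3 := Real.sqrt_nonneg _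
  -- step 1: s2*s3 ≤ E*s1 + C*D
  have step1 : s2 * s3 ≤ E * s1 + C * D := by
    have hsq : (s2 * s3) ^ 2 ≤ (E * s1 + C * D) ^ 2 := by
      have hCE : 0 ≤ C * D * E * s1 := by positivity
      nlinarith [mul_nonneg hC hD, sq_nonneg (E - A), mul_nonneg hD hD,
        mul_nonneg (mul_nonneg hC hD) (sq_nonneg E),
        mul_nonneg hD (mul_nonneg hD (mul_nonneg (sub_nonneg.mpr hAE) (add_nonneg hE hA)))]
    have hb : 0 ≤ E * s1 + C * D := add_nonneg (mul_nonneg hE hn1) (mul_nonneg hC hD)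
    nlinarith [hsq, hb, mul_nonneg hn2 hn3]
  -- step 2
  nlinarith [step1, mul_nonneg hC hD, sq_nonneg (s1 + E - s2 - s3),
    add_nonneg (add_nonneg hn1 hE) (add_nonneg hn2 hn3)]

lemma half_bound (x y : ℝ) (hx : 0 ≤ x) (hy : 0 ≤ y) :
    (x + y) / Real.sqrt 2 ≤ Real.sqrt (x ^ 2 + y ^ 2) := by
  have h2 : (0:ℝ) < Real.sqrt 2 := Real.sqrt_pos.mpr (by norm_num)
  rw [div_le_iff₀ h2, ← Real.sqrt_mul_self (by positivity : (0:ℝ) ≤ x + y)]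
  rw [← Real.sqrt_mul (by positivity)]
  apply Real.sqrt_le_sqrt
  nlinarith [sq_nonneg (x - y)]

/-- Uniform lower bound on the Case 1 triangle excess:
`√(A² + (C+D)²) + √(C² + B²) − √(D² + (A+B)²) ≥ √2·C − ((√2 − 1)/√2)·(A + B)`. -/
theorem case1_triangle_excess_lower_bound
    (A B C D : ℝ) (hA : 0 ≤ A) (hB : 0 ≤ B) (hC : 0 ≤ C) (hD : 0 ≤ D) :
    Real.sqrt 2 * C - ((Real.sqrt 2 - 1) / Real.sqrt 2) * (A + B) ≤
      Real.sqrt (A ^ 2 + (C + D) ^ 2) + Real.sqrt (C ^ 2 + B ^ 2) -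
        Real.sqrt (D ^ 2 + (A + B) ^ 2) := by
  have hkey := key_mono A C D (A + B) hA hC hD (by linarith)
  have h1 : (A + C) / Real.sqrt 2 ≤ Real.sqrt (A ^ 2 + C ^ 2) := half_bound A C hA hC
  have h2 : (C + B) / Real.sqrt 2 ≤ Real.sqrt (C ^ 2 + B ^ 2) := half_bound C B hC hB
  have hs2 : (0:ℝ) < Real.sqrt 2 := Real.sqrt_pos.mpr (by norm_num)
  have hsq : Real.sqrt 2 * Real.sqrt 2 = 2 := Real.mul_self_sqrt (by norm_num)
  have heq : Real.sqrt 2 * C - ((Real.sqrt 2 - 1) / Real.sqrt 2) * (A + B) =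
      (A + C) / Real.sqrt 2 + (C + B) / Real.sqrt 2 - (A + B) := by
    field_simp
    ring_nf
    nlinarith [hsq]
  linarith
end

section
/- Fix real numbers A, B, C ≥ 0. The function D ↦ √(A² + (C+D)²) + √(C² + B²) − √(D² + (A+B)²) is monotone nondecreasing in D on [0, ∞). In particular, its value at any D ≥ 0 is at least its value at D = 0, namely √(A² + C²) + √(C² + B²) − (A + B). -/
/-- The Case 1 triangle excess `D ↦ √(A² + (C+D)²) + √(C² + B²) − √(D² + (A+B)²)` is
monotone nondecreasing in `D` on `[0, ∞)`; in particular its value at any `D ≥ 0` is at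
least its value at `D = 0`, namely `√(A² + C²) + √(C² + B²) − (A + B)`. -/
theorem case1_triangle_excess_monotone
    (A B C : ℝ) (hA : 0 ≤ A) (hB : 0 ≤ B) (hC : 0 ≤ C) :
    MonotoneOn (fun D : ℝ =>
        Real.sqrt (A ^ 2 + (C + D) ^ 2) + Real.sqrt (C ^ 2 + B ^ 2) -
          Real.sqrt (D ^ 2 + (A + B) ^ 2)) (Set.Ici 0) ∧
    ∀ D : ℝ, 0 ≤ D →
      Real.sqrt (A ^ 2 + C ^ 2) + Real.sqrt (C ^ 2 + B ^ 2) - (A + B) ≤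
        Real.sqrt (A ^ 2 + (C + D) ^ 2) + Real.sqrt (C ^ 2 + B ^ 2) -
          Real.sqrt (D ^ 2 + (A + B) ^ 2) := by
  set f : ℝ → ℝ := fun D : ℝ =>
      Real.sqrt (A ^ 2 + (C + D) ^ 2) + Real.sqrt (C ^ 2 + B ^ 2) -
        Real.sqrt (D ^ 2 + (A + B) ^ 2) with hf
  have key : ∀ x : ℝ, 0 < x →
      HasDerivAt f ((C + x) / Real.sqrt (A ^ 2 + (C + x) ^ 2)
        - x / Real.sqrt (x ^ 2 + (A + B) ^ 2)) x := by
    intro x hx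
    have hu : (0:ℝ) < A ^ 2 + (C + x) ^ 2 := by nlinarith
    have hv : (0:ℝ) < x ^ 2 + (A + B) ^ 2 := by nlinarith
    have h1 : HasDerivAt (fun D : ℝ => A ^ 2 + (C + D) ^ 2) (2 * (C + x)) x := by
      have : HasDerivAt (fun D : ℝ => C + D) 1 x := (hasDerivAt_id x).const_add C
      have h2 := (this.pow 2).const_add (A ^ 2)
      simpa using h2
    have h2 : HasDerivAt (fun D : ℝ => D ^ 2 + (A + B) ^ 2) (2 * x) x := by
      have := ((hasDerivAt_id x).pow 2).add_const ((A + B) ^ 2)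
      simpa [mul_comm] using this
    have hs1 : HasDerivAt (fun D : ℝ => Real.sqrt (A ^ 2 + (C + D) ^ 2))
        ((2 * (C + x)) / (2 * Real.sqrt (A ^ 2 + (C + x) ^ 2))) x := by
      have := (Real.hasDerivAt_sqrt hu.ne').comp x h1
      simpa [div_eq_mul_inv, mul_comm, Function.comp_def] using this
    have hs2 : HasDerivAt (fun D : ℝ => Real.sqrt (D ^ 2 + (A + B) ^ 2))
        ((2 * x) / (2 * Real.sqrt (x ^ 2 + (A + B) ^ 2))) x := by
      have := (Real.hasDerivAt_sqrt hv.ne').comp x h2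
      simpa [div_eq_mul_inv, mul_comm, Function.comp_def] using this
    have := (hs1.add_const (Real.sqrt (C ^ 2 + B ^ 2))).sub hs2
    have hru : Real.sqrt (A ^ 2 + (C + x) ^ 2) ≠ 0 := (Real.sqrt_pos.2 hu).ne'
    have hrv : Real.sqrt (x ^ 2 + (A + B) ^ 2) ≠ 0 := (Real.sqrt_pos.2 hv).ne'
    have e1 : (2 * (C + x)) / (2 * Real.sqrt (A ^ 2 + (C + x) ^ 2))
        = (C + x) / Real.sqrt (A ^ 2 + (C + x) ^ 2) := by
      field_simp
    have e2 : (2 * x) / (2 * Real.sqrt (x ^ 2 + (A + B) ^ 2))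
        = x / Real.sqrt (x ^ 2 + (A + B) ^ 2) := by
      field_simp
    rw [e1, e2] at this
    exact this
  have hmono : MonotoneOn f (Set.Ici 0) := by
    apply monotoneOn_of_deriv_nonneg (convex_Ici 0)
    · apply Continuous.continuousOn
      apply Continuous.sub
      · exact (Real.continuous_sqrt.comp (by continuity)).add continuous_const
      · exact Real.continuous_sqrt.comp (by continuity)
    · intro x hx
      rw [interior_Ici] at hx
      exact ((key x hx).differentiableAt).differentiableWithinAt
    · intro x hx
      rw [interior_Ici] at hx
      have hxx : (0:ℝ) < x := hx
      rw [(key x hx).deriv]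
      have hu : (0:ℝ) < A ^ 2 + (C + x) ^ 2 := by nlinarith
      have hv : (0:ℝ) < x ^ 2 + (A + B) ^ 2 := by nlinarith
      rw [sub_nonneg, div_le_div_iff₀ (Real.sqrt_pos.2 hv) (Real.sqrt_pos.2 hu)]
      have hx0 : 0 ≤ x := hxx.le
      have e1 : x * Real.sqrt (A ^ 2 + (C + x) ^ 2)
          = Real.sqrt (x ^ 2 * (A ^ 2 + (C + x) ^ 2)) := by
        rw [Real.sqrt_mul (sq_nonneg x), Real.sqrt_sq hx0]
      have e2 : (C + x) * Real.sqrt (x ^ 2 + (A + B) ^ 2)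
          = Real.sqrt ((C + x) ^ 2 * (x ^ 2 + (A + B) ^ 2)) := by
        rw [Real.sqrt_mul (sq_nonneg (C + x)), Real.sqrt_sq (by linarith : (0:ℝ) ≤ C + x)]
      rw [e1, e2]
      apply Real.sqrt_le_sqrt
      have h3 : x * A ≤ (C + x) * (A + B) := by nlinarith
      have h4 : (0:ℝ) ≤ x * A := mul_nonneg hx0 hA
      have h5 := mul_le_mul h3 h3 h4 (le_trans h4 h3)
      nlinarith [h5]
  refine ⟨hmono, fun D hD => ?_⟩
  have h0 := hmono (Set.self_mem_Ici) hD hD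
  have e0 : f 0 = Real.sqrt (A ^ 2 + C ^ 2) + Real.sqrt (C ^ 2 + B ^ 2) - (A + B) := by
    simp [hf, Real.sqrt_sq (by linarith : (0:ℝ) ≤ A + B)]
  rw [e0] at h0
  exact h0
end

section
/- For all real numbers z > 0 and c > 0, ∫₀¹ ∫₀¹ √( z² + c²·(u − v)² ) du dv = (1/(3c²))·( 3·c·z²·log( (c + √(c² + z²))/z ) + 2·z³ + (c² − 2z²)·√(c² + z²) ). -/
open intervalIntegral

noncomputable def gBHH (z t : ℝ) : ℝ :=
  (t * Real.sqrt (z ^ 2 + t ^ 2) + z ^ 2 * Real.arsinh (t / z)) / 2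

noncomputable def HBHH (z t : ℝ) : ℝ :=
  ((z ^ 2 + t ^ 2) * Real.sqrt (z ^ 2 + t ^ 2) / 3
    + z ^ 2 * (t * Real.arsinh (t / z) - Real.sqrt (z ^ 2 + t ^ 2))) / 2

lemma sqrt_deriv (z : ℝ) (hz : 0 < z) (t : ℝ) :
    HasDerivAt (fun t => Real.sqrt (z ^ 2 + t ^ 2))
      (t / Real.sqrt (z ^ 2 + t ^ 2)) t := by
  have hpos : 0 < z ^ 2 + t ^ 2 := by positivity
  have h1 : HasDerivAt (fun t : ℝ => z ^ 2 + t ^ 2) (2 * t) t := by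
    simpa using (hasDerivAt_pow 2 t).const_add (z ^ 2)
  have h2 := (Real.hasDerivAt_sqrt hpos.ne').comp t h1
  refine HasDerivAt.congr_deriv h2 (Eq.symm ?_)
  have hs : Real.sqrt (z ^ 2 + t ^ 2) ≠ 0 := by positivity
  field_simp

lemma arsinh_deriv (z : ℝ) (hz : 0 < z) (t : ℝ) :
    HasDerivAt (fun t => Real.arsinh (t / z))
      (1 / Real.sqrt (z ^ 2 + t ^ 2)) t := by
  have h1 : HasDerivAt (fun t : ℝ => t / z) (1 / z) t :=
    (hasDerivAt_id t).div_const z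
  have h2 := (Real.hasDerivAt_arsinh (t / z)).comp t h1
  refine HasDerivAt.congr_deriv h2 (Eq.symm ?_)
  have key : Real.sqrt (1 + (t / z) ^ 2) = Real.sqrt (z ^ 2 + t ^ 2) / z := by
    rw [show (1 : ℝ) + (t / z) ^ 2 = (z ^ 2 + t ^ 2) / z ^ 2 by field_simp,
      Real.sqrt_div (by positivity), Real.sqrt_sq hz.le]
  rw [key]
  have hs : Real.sqrt (z ^ 2 + t ^ 2) ≠ 0 := by positivity
  field_simp

lemma gBHH_deriv (z : ℝ) (hz : 0 < z) (t : ℝ) :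
    HasDerivAt (gBHH z) (Real.sqrt (z ^ 2 + t ^ 2)) t := by
  have hs := sqrt_deriv z hz t
  have ha := arsinh_deriv z hz t
  have h1 : HasDerivAt (fun t => t * Real.sqrt (z ^ 2 + t ^ 2))
      (1 * Real.sqrt (z ^ 2 + t ^ 2) + t * (t / Real.sqrt (z ^ 2 + t ^ 2))) t :=
    (hasDerivAt_id t).mul hs
  have h := ((h1.add (ha.const_mul (z ^ 2))).div_const 2)
  refine HasDerivAt.congr_deriv h (Eq.symm ?_)
  have hspos : 0 < Real.sqrt (z ^ 2 + t ^ 2) := by positivity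
  have hsq : Real.sqrt (z ^ 2 + t ^ 2) ^ 2 = z ^ 2 + t ^ 2 :=
    Real.sq_sqrt (by positivity)
  field_simp
  nlinarith [hsq]

lemma HBHH_deriv (z : ℝ) (hz : 0 < z) (t : ℝ) :
    HasDerivAt (HBHH z) (gBHH z t) t := by
  have hs := sqrt_deriv z hz t
  have ha := arsinh_deriv z hz t
  have h1 : HasDerivAt (fun t : ℝ => z ^ 2 + t ^ 2) (2 * t) t := by
    simpa using (hasDerivAt_pow 2 t).const_add (z ^ 2)
  have h2 : HasDerivAt (fun t => (z ^ 2 + t ^ 2) * Real.sqrt (z ^ 2 + t ^ 2))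
      (2 * t * Real.sqrt (z ^ 2 + t ^ 2) + (z ^ 2 + t ^ 2) * (t / Real.sqrt (z ^ 2 + t ^ 2))) t :=
    h1.mul hs
  have h3 : HasDerivAt (fun t => t * Real.arsinh (t / z))
      (1 * Real.arsinh (t / z) + t * (1 / Real.sqrt (z ^ 2 + t ^ 2))) t :=
    (hasDerivAt_id t).mul ha
  have h := (((h2.div_const 3).add ((h3.sub hs).const_mul (z ^ 2))).div_const 2)
  refine HasDerivAt.congr_deriv h (Eq.symm ?_)
  have hspos : 0 < Real.sqrt (z ^ 2 + t ^ 2) := by positivity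
  have hsq : Real.sqrt (z ^ 2 + t ^ 2) ^ 2 = z ^ 2 + t ^ 2 :=
    Real.sq_sqrt (by positivity)
  unfold gBHH
  field_simp
  linear_combination t * hsq

/-- The Beardwood–Halton–Hammersley inner double integral. -/
theorem bhh_double_integral (z c : ℝ) (hz : 0 < z) (hc : 0 < c) :
    ∫ v in (0 : ℝ)..1, ∫ u in (0 : ℝ)..1, Real.sqrt (z ^ 2 + c ^ 2 * (u - v) ^ 2) =
      (1 / (3 * c ^ 2)) *
        (3 * c * z ^ 2 * Real.log ((c + Real.sqrt (c ^ 2 + z ^ 2)) / z) +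
          2 * z ^ 3 + (c ^ 2 - 2 * z ^ 2) * Real.sqrt (c ^ 2 + z ^ 2)) := by
  -- inner integral
  have inner_eq : ∀ v : ℝ, (∫ u in (0:ℝ)..1, Real.sqrt (z ^ 2 + c ^ 2 * (u - v) ^ 2))
      = (gBHH z (c * (1 - v)) - gBHH z (c * (0 - v))) / c := by
    intro v
    have hderiv : ∀ u ∈ Set.uIcc (0:ℝ) 1,
        HasDerivAt (fun u => gBHH z (c * (u - v)) / c)
          (Real.sqrt (z ^ 2 + c ^ 2 * (u - v) ^ 2)) u := by
      intro u _
      have hlin : HasDerivAt (fun u : ℝ => c * (u - v)) c u := by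
        simpa using ((hasDerivAt_id u).sub_const v).const_mul c
      have h := ((gBHH_deriv z hz (c * (u - v))).comp u hlin).div_const c
      refine HasDerivAt.congr_deriv h (Eq.symm ?_)
      rw [mul_pow]
      field_simp
    have hcont : Continuous fun u : ℝ => Real.sqrt (z ^ 2 + c ^ 2 * (u - v) ^ 2) := by
      fun_prop
    rw [intervalIntegral.integral_eq_sub_of_hasDerivAt hderiv (hcont.intervalIntegrable (μ := MeasureTheory.volume) 0 1)]
    ring
  rw [intervalIntegral.integral_congr (fun v _ => inner_eq v)]
  -- outer integral
  have hderiv2 : ∀ v ∈ Set.uIcc (0:ℝ) 1,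
      HasDerivAt (fun v => (- HBHH z (c * (1 - v)) + HBHH z (c * (0 - v))) / c ^ 2)
        ((gBHH z (c * (1 - v)) - gBHH z (c * (0 - v))) / c) v := by
    intro v _
    have hl1 : HasDerivAt (fun v : ℝ => c * (1 - v)) (-c) v := by
      simpa using ((hasDerivAt_const v (1:ℝ)).sub (hasDerivAt_id v)).const_mul c
    have hl2 : HasDerivAt (fun v : ℝ => c * (0 - v)) (-c) v := by
      simpa using ((hasDerivAt_const v (0:ℝ)).sub (hasDerivAt_id v)).const_mul c
    have h1 := (HBHH_deriv z hz (c * (1 - v))).comp v hl1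
    have h2 := (HBHH_deriv z hz (c * (0 - v))).comp v hl2
    have h := ((h1.neg.add h2).div_const (c ^ 2))
    refine HasDerivAt.congr_deriv h (Eq.symm ?_)
    field_simp
    ring
  have hcont2 : Continuous fun v : ℝ =>
      (gBHH z (c * (1 - v)) - gBHH z (c * (0 - v))) / c := by
    unfold gBHH
    have harsinh : Continuous Real.arsinh := Real.continuous_arsinh
    fun_prop
  rw [intervalIntegral.integral_eq_sub_of_hasDerivAt hderiv2 (hcont2.intervalIntegrable (μ := MeasureTheory.volume) 0 1)]
  -- now pure algebra
  simp only [mul_zero, mul_one, sub_zero, zero_sub, mul_neg]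
  unfold HBHH
  have hsz : Real.sqrt (z ^ 2 + 0 ^ 2) = z := by
    simpa using Real.sqrt_sq hz.le
  have hsc : Real.sqrt (z ^ 2 + (-c) ^ 2) = Real.sqrt (c ^ 2 + z ^ 2) := by
    rw [neg_pow]; ring_nf
  have hsc' : Real.sqrt (z ^ 2 + c ^ 2) = Real.sqrt (c ^ 2 + z ^ 2) := by
    ring_nf
  have harsinh : Real.arsinh (c / z) =
      Real.log ((c + Real.sqrt (c ^ 2 + z ^ 2)) / z) := by
    rw [Real.arsinh]
    congr 1
    have key : Real.sqrt (1 + (c / z) ^ 2) = Real.sqrt (c ^ 2 + z ^ 2) / z := by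
      rw [show (1 : ℝ) + (c / z) ^ 2 = (c ^ 2 + z ^ 2) / z ^ 2 by field_simp; ring,
        Real.sqrt_div (by positivity), Real.sqrt_sq hz.le]
    rw [key]
    field_simp
  have harsinh0 : Real.arsinh (0 / z) = 0 := by simp
  have harsinhneg : Real.arsinh (-c / z) = - Real.arsinh (c / z) := by
    rw [neg_div, Real.arsinh_neg]
  rw [hsz, hsc, hsc', harsinh0, harsinhneg, harsinh]
  have hsq : Real.sqrt (c ^ 2 + z ^ 2) ^ 2 = c ^ 2 + z ^ 2 := Real.sq_sqrt (by positivity)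
  field_simp
  simp only [sub_self, ne_eq, OfNat.ofNat_ne_zero, not_false_eq_true, zero_pow, mul_zero, add_zero,
    zero_mul, zero_div, Real.arsinh_zero, Real.sqrt_sq hz.le]
  ring
end
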